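/- arXiv:1907.11422 — 2 statements merged into one kernel-verified Lean document; each statement's English description precedes it below -/
import Mathlib

section
/- Fix a real Δ > 3 and vertices x, y ∈ V; set D_{−1} = 0 and D_i = W(x, y) · ∑_{j=0}^{i} Δ^j for i ≥ 0. Let 0 ≤ i ≤ k−1 with A_i ≠ ∅, and suppose d_G(x, y) ≤ D_i and d_H(x, p_i(x)) ≤ (2Δ/(Δ−3)) · D_{i−1}. Let m = max{Δ · D_{i−1}, d_G(x, y)}. Then at least one of the following holds: (1) d_H(x, y) ≤ (3 + 8/(Δ−3)) · m; or (2) A_{i+1} ≠ ∅ and d_H(x, p_{i+1}(x)) ≤ (2Δ/(Δ−3)) · D_i. -/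
open scoped ENNReal Classical

namespace ASP

variable {V : Type*}

noncomputable def wWeight {G : SimpleGraph V} (w : V → V → ℝ≥0∞) {x y : V}
    (p : G.Walk x y) : ℝ≥0∞ :=
  (p.darts.map fun d => w d.toProd.1 d.toProd.2).sum

noncomputable def gdist (G : SimpleGraph V) (w : V → V → ℝ≥0∞) (x y : V) : ℝ≥0∞ :=
  ⨅ p : G.Walk x y, wWeight w p

noncomputable def maxW {G : SimpleGraph V} (w : V → V → ℝ≥0∞) {x y : V}
    (p : G.Walk x y) : ℝ≥0∞ :=
  (p.darts.map fun d => w d.toProd.1 d.toProd.2).foldr max 0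

/-- The bunch of a vertex `u` of level `i`: all vertices of `A i` strictly closer to `u` than
`A (i+1)` (vacuously all of `A i` if `A (i+1) = ∅`), together with the pivots of all
nonempty higher levels. -/
def bunch (G : SimpleGraph V) (w : V → V → ℝ≥0∞) (A : ℕ → Set V) (pv : ℕ → V → V)
    (k i : ℕ) (u : V) : Set V :=
  {v | v ∈ A i ∧ ∀ a ∈ A (i + 1), gdist G w u v < gdist G w u a} ∪
    {v | ∃ j, i < j ∧ j < k ∧ (A j).Nonempty ∧ v = pv j u}

/-- The emulator graph `H`: an edge `{u, v}` for every `u ∈ A i \ A (i+1)` and `v ∈ B(u)`. -/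
def emulGraph (G : SimpleGraph V) (w : V → V → ℝ≥0∞) (A : ℕ → Set V) (pv : ℕ → V → V)
    (k : ℕ) : SimpleGraph V where
  Adj u v := u ≠ v ∧ ∃ i, (u ∈ A i ∧ u ∉ A (i + 1) ∧ v ∈ bunch G w A pv k i u) ∨
      (v ∈ A i ∧ v ∉ A (i + 1) ∧ u ∈ bunch G w A pv k i v)
  symm := ⟨fun u v h => ⟨h.1.symm, h.2.imp fun _ hi => hi.symm⟩⟩
  loopless := ⟨fun u h => h.1 rfl⟩


section basic
variable {G : SimpleGraph V} {w : V → V → ℝ≥0∞}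

lemma wWeight_append {x y z : V} (p : G.Walk x y) (q : G.Walk y z) :
    wWeight w (p.append q) = wWeight w p + wWeight w q := by
  simp [wWeight]

lemma gdist_le {x y : V} (p : G.Walk x y) : gdist G w x y ≤ wWeight w p := iInf_le _ p

lemma gdist_self (x : V) : gdist G w x x = 0 :=
  le_antisymm (by simpa [wWeight] using gdist_le (SimpleGraph.Walk.nil : G.Walk x x))
    zero_le

lemma gdist_triangle (x y z : V) :
    gdist G w x z ≤ gdist G w x y + gdist G w y z := by
  rcases isEmpty_or_nonempty (G.Walk x y) with h | h
  · simp [gdist, iInf_of_empty]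
  rcases isEmpty_or_nonempty (G.Walk y z) with h2 | h2
  · simp [gdist, iInf_of_empty]
  rw [gdist, gdist, gdist, ENNReal.iInf_add]
  refine le_iInf fun p => ?_
  rw [ENNReal.add_iInf]
  refine le_iInf fun q => ?_
  calc gdist G w x z ≤ wWeight w (p.append q) := gdist_le _
    _ = _ := wWeight_append p q

lemma gdist_adj_le {x y : V} (h : G.Adj x y) : gdist G w x y ≤ w x y := by
  calc gdist G w x y ≤ wWeight w (SimpleGraph.Walk.cons h SimpleGraph.Walk.nil) := gdist_le _
    _ = w x y := by simp [wWeight]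

lemma wWeight_reverse (hwsym : ∀ u v, G.Adj u v → w u v = w v u) {x y : V} (p : G.Walk x y) :
    wWeight w p.reverse = wWeight w p := by
  unfold wWeight
  rw [SimpleGraph.Walk.darts_reverse, List.map_reverse, List.sum_reverse, List.map_map]
  congr 1
  refine List.map_congr_left fun d _ => ?_
  simp only [Function.comp_apply, SimpleGraph.Dart.symm_toProd, Prod.fst_swap, Prod.snd_swap]
  exact (hwsym _ _ d.adj).symm

lemma gdist_symm (hwsym : ∀ u v, G.Adj u v → w u v = w v u) (x y : V) :
    gdist G w x y = gdist G w y x := by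
  have key : ∀ a b : V, gdist G w a b ≤ gdist G w b a := fun a b =>
    le_iInf fun p => by
      calc gdist G w a b ≤ wWeight w p.reverse := gdist_le _
        _ = wWeight w p := wWeight_reverse hwsym p
  exact le_antisymm (key x y) (key y x)

lemma gdist_le_gdist_of_walk {H : SimpleGraph V} {ω : V → V → ℝ≥0∞}
    (hrefl : ∀ a, ω a a = 0) (htri : ∀ a b c, ω a c ≤ ω a b + ω b c) {x y : V} :
    ω x y ≤ gdist H ω x y := by
  refine le_iInf fun p => ?_
  induction p with
  | nil => simp [hrefl, wWeight]
  | cons h p ih =>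
    rename_i a b c
    calc ω a c ≤ ω a b + ω b c := htri a b c
      _ ≤ ω a b + wWeight ω p := by exact add_le_add_right ih _
      _ = wWeight ω (SimpleGraph.Walk.cons h p) := by simp [wWeight]

end basic

section emul

variable {G : SimpleGraph V} {w : V → V → ℝ≥0∞} {A : ℕ → Set V} {pv : ℕ → V → V} {k : ℕ}

lemma exists_level (hA0 : A 0 = Set.univ) (hAnest : ∀ i, A (i + 1) ⊆ A i) (hAk : A k = ∅)
    (u : V) : ∃ ℓ, ℓ < k ∧ u ∈ A ℓ ∧ u ∉ A (ℓ + 1) := by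
  have hAmono : Antitone A := antitone_nat_of_succ_le hAnest
  have h0 : u ∈ A 0 := by rw [hA0]; trivial
  have hex : ∃ j, u ∉ A j := ⟨k, by rw [hAk]; exact id⟩
  classical
  set n := Nat.find hex with hn
  have hnn : u ∉ A n := Nat.find_spec hex
  have hnpos : n ≠ 0 := fun h => hnn (h ▸ h0)
  have hmem : u ∈ A (n - 1) := by
    by_contra h
    exact Nat.find_min hex (m := n - 1) (by omega) h
  refine ⟨n - 1, ?_, hmem, ?_⟩
  · by_contra h
    push_neg at h
    have hmk : u ∈ A k := hAmono h hmem
    rw [hAk] at hmk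
    exact hmk
  · have hsucc : n - 1 + 1 = n := by omega
    rw [hsucc]; exact hnn

lemma gdistH_zero (hwsym : ∀ u v, G.Adj u v → w u v = w v u)
    (hA0 : A 0 = Set.univ) (hAnest : ∀ i, A (i + 1) ⊆ A i) (hAk : A k = ∅)
    (hpv : ∀ i, i < k → ∀ v : V, (A i).Nonempty →
      pv i v ∈ A i ∧ ∀ a ∈ A i, gdist G w v (pv i v) ≤ gdist G w v a)
    (a b : V) (hab : gdist G w a b = 0) :
    gdist (emulGraph G w A pv k) (gdist G w) a b = 0 := by
  classical
  set H := emulGraph G w A pv k with hH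
  have hAmono : Antitone A := antitone_nat_of_succ_le hAnest
  have hHsym : ∀ u v, H.Adj u v → gdist G w u v = gdist G w v u :=
    fun u v _ => gdist_symm hwsym u v
  have key : ∀ n : ℕ, ∀ a b : V, ∀ ℓa ℓb : ℕ, ℓa < k → a ∈ A ℓa → a ∉ A (ℓa + 1) →
      ℓb < k → b ∈ A ℓb → b ∉ A (ℓb + 1) → (k - 1 - ℓa) + (k - 1 - ℓb) ≤ n →
      gdist G w a b = 0 → gdist H (gdist G w) a b = 0 := by
    intro n
    induction n using Nat.strong_induction_on with
    | _ n ih =>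
      intro a b ℓa ℓb hℓa haA haN hℓb hbA hbN hm hab
      by_cases hA1 : ∃ t ∈ A (ℓa + 1), gdist G w a t = 0
      · obtain ⟨t, htA, ht0⟩ := hA1
        have hk1 : ℓa + 1 < k := by
          rcases Nat.lt_or_ge (ℓa + 1) k with h | h
          · exact h
          · exfalso
            have : A (ℓa + 1) ⊆ A k := hAmono h
            rw [hAk] at this
            exact this htA
        set a' := pv (ℓa + 1) a with ha'
        obtain ⟨ha'A, hmin⟩ := hpv (ℓa + 1) hk1 a ⟨t, htA⟩
        have ha'0 : gdist G w a a' = 0 :=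
          le_antisymm (le_trans (hmin t htA) (le_of_eq ht0)) zero_le
        obtain ⟨ℓ', hℓ'k, hmemA', hnotA'⟩ := exists_level hA0 hAnest hAk a'
        have hgt : ℓa < ℓ' := by
          by_contra h
          push_neg at h
          exact hnotA' (hAmono (by omega : ℓ' + 1 ≤ ℓa + 1) ha'A)
        have hadj : H.Adj a a' :=
          (⟨fun he => haN (he ▸ ha'A), ℓa,
            Or.inl ⟨haA, haN, Or.inr ⟨ℓa + 1, Nat.lt_succ_self _, hk1, ⟨t, htA⟩, rfl⟩⟩⟩ : (emulGraph G w A pv k).Adj a a')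
        have hd1 : gdist H (gdist G w) a a' = 0 :=
          le_antisymm (le_trans (gdist_adj_le hadj) (le_of_eq ha'0)) zero_le
        have hab' : gdist G w a' b = 0 := by
          refine le_antisymm ?_ zero_le
          calc gdist G w a' b ≤ gdist G w a' a + gdist G w a b := gdist_triangle _ _ _
            _ = 0 := by rw [gdist_symm hwsym a' a, ha'0, hab, add_zero]
        have hmeas : (k - 1 - ℓ') + (k - 1 - ℓb) < n := by
          have h1 : k - 1 - ℓ' < k - 1 - ℓa := by omega
          omega
        have hrec := ih _ hmeas a' b ℓ' ℓb hℓ'k hmemA' hnotA' hℓb hbA hbN le_rfl hab'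
        refine le_antisymm ?_ zero_le
        calc gdist H (gdist G w) a b
            ≤ gdist H (gdist G w) a a' + gdist H (gdist G w) a' b := gdist_triangle _ _ _
          _ = 0 := by rw [hd1, hrec, add_zero]
      · by_cases hB1 : ∃ t ∈ A (ℓb + 1), gdist G w b t = 0
        · obtain ⟨t, htA, ht0⟩ := hB1
          have hk1 : ℓb + 1 < k := by
            rcases Nat.lt_or_ge (ℓb + 1) k with h | h
            · exact h
            · exfalso
              have : A (ℓb + 1) ⊆ A k := hAmono h
              rw [hAk] at this
              exact this htA
          set b' := pv (ℓb + 1) b with hb'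
          obtain ⟨hb'A, hmin⟩ := hpv (ℓb + 1) hk1 b ⟨t, htA⟩
          have hb'0 : gdist G w b b' = 0 :=
            le_antisymm (le_trans (hmin t htA) (le_of_eq ht0)) zero_le
          obtain ⟨ℓ', hℓ'k, hmemA', hnotA'⟩ := exists_level hA0 hAnest hAk b'
          have hgt : ℓb < ℓ' := by
            by_contra h
            push_neg at h
            exact hnotA' (hAmono (by omega : ℓ' + 1 ≤ ℓb + 1) hb'A)
          have hadj : H.Adj b b' :=
            (⟨fun he => hbN (he ▸ hb'A), ℓb,
              Or.inl ⟨hbA, hbN, Or.inr ⟨ℓb + 1, Nat.lt_succ_self _, hk1, ⟨t, htA⟩, rfl⟩⟩⟩ : (emulGraph G w A pv k).Adj b b')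
          have hd1 : gdist H (gdist G w) b b' = 0 :=
            le_antisymm (le_trans (gdist_adj_le hadj) (le_of_eq hb'0)) zero_le
          have hab' : gdist G w a b' = 0 := by
            refine le_antisymm ?_ zero_le
            calc gdist G w a b' ≤ gdist G w a b + gdist G w b b' := gdist_triangle _ _ _
              _ = 0 := by rw [hab, hb'0, add_zero]
          have hmeas : (k - 1 - ℓa) + (k - 1 - ℓ') < n := by
            have h1 : k - 1 - ℓ' < k - 1 - ℓb := by omega
            omega
          have hrec := ih _ hmeas a b' ℓa ℓ' hℓa haA haN hℓ'k hmemA' hnotA' le_rfl hab'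
          refine le_antisymm ?_ zero_le
          calc gdist H (gdist G w) a b
              ≤ gdist H (gdist G w) a b' + gdist H (gdist G w) b' b := gdist_triangle _ _ _
            _ = 0 := by
              rw [hrec, gdist_symm hHsym b' b, hd1, add_zero]
        · push_neg at hA1 hB1
          rcases eq_or_ne a b with rfl | hne
          · exact gdist_self a
          rcases le_or_gt ℓa ℓb with hle | hlt
          · have hadj : H.Adj a b :=
              (⟨hne, ℓa, Or.inl ⟨haA, haN, Or.inl ⟨hAmono hle hbA, fun t htA => by
                rw [hab]; exact pos_iff_ne_zero.mpr (hA1 t htA)⟩⟩⟩ : (emulGraph G w A pv k).Adj a b)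
            exact le_antisymm (le_trans (gdist_adj_le hadj) (le_of_eq hab)) zero_le
          · have hba : gdist G w b a = 0 := by rw [gdist_symm hwsym b a]; exact hab
            have hadj : H.Adj a b :=
              (⟨hne, ℓb, Or.inr ⟨hbA, hbN, Or.inl ⟨hAmono (le_of_lt hlt) haA, fun t htA => by
                rw [hba]; exact pos_iff_ne_zero.mpr (hB1 t htA)⟩⟩⟩ : (emulGraph G w A pv k).Adj a b)
            exact le_antisymm (le_trans (gdist_adj_le hadj) (le_of_eq hab)) zero_le
  obtain ⟨ℓa, h1, h2, h3⟩ := exists_level hA0 hAnest hAk a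
  obtain ⟨ℓb, h4, h5, h6⟩ := exists_level hA0 hAnest hAk b
  exact key _ a b ℓa ℓb h1 h2 h3 h4 h5 h6 le_rfl hab

end emul

/-- Lemma B.1: with `D_{-1} = 0`, `D_i = W(x,y)·∑_{j=0}^{i} Δ^j`, if
`d_G(x,y) ≤ D_i` and `d_H(x,p_i(x)) ≤ (2Δ/(Δ-3))·D_{i-1}`, then with
`m = max{Δ·D_{i-1}, d_G(x,y)}`, either `d_H(x,y) ≤ (3 + 8/(Δ-3))·m`, or `A_{i+1} ≠ ∅` and
`d_H(x,p_{i+1}(x)) ≤ (2Δ/(Δ-3))·D_i`.  (Here the sum `∑ j ∈ Finset.range i, Δ^j` is `D_{i-1}`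
divided by `W(x,y)`, so that `D_{i-1} = 0` when `i = 0`.) -/
theorem statement8 [Fintype V] (G : SimpleGraph V) (hconn : G.Connected)
    (w : V → V → ℝ≥0∞) (hwsym : ∀ u v, G.Adj u v → w u v = w v u)
    (hwfin : ∀ u v, G.Adj u v → w u v ≠ ⊤)
    (k : ℕ) (hk : 1 ≤ k) (A : ℕ → Set V) (hA0 : A 0 = Set.univ)
    (hAnest : ∀ i, A (i + 1) ⊆ A i) (hAk : A k = ∅)
    (pv : ℕ → V → V)
    (hpv : ∀ i, i < k → ∀ v : V, (A i).Nonempty →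
      pv i v ∈ A i ∧ ∀ a ∈ A i, gdist G w v (pv i v) ≤ gdist G w v a)
    (Δ : ℝ) (hΔ : 3 < Δ) (x y : V) (Wxy : ℝ≥0∞)
    (hW : ∃ q : G.Walk x y, q.IsPath ∧ wWeight w q = gdist G w x y ∧ maxW w q = Wxy)
    (i : ℕ) (hi : i < k) (hAi : (A i).Nonempty)
    (hclose : gdist G w x y ≤ Wxy * ENNReal.ofReal (∑ j ∈ Finset.range (i + 1), Δ ^ j))
    (hpiv : gdist (emulGraph G w A pv k) (gdist G w) x (pv i x) ≤
      ENNReal.ofReal (2 * Δ / (Δ - 3)) *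
        (Wxy * ENNReal.ofReal (∑ j ∈ Finset.range i, Δ ^ j))) :
    gdist (emulGraph G w A pv k) (gdist G w) x y ≤
        ENNReal.ofReal (3 + 8 / (Δ - 3)) *
          max (ENNReal.ofReal Δ * (Wxy * ENNReal.ofReal (∑ j ∈ Finset.range i, Δ ^ j)))
            (gdist G w x y) ∨
      ((A (i + 1)).Nonempty ∧
        gdist (emulGraph G w A pv k) (gdist G w) x (pv (i + 1) x) ≤
          ENNReal.ofReal (2 * Δ / (Δ - 3)) *
            (Wxy * ENNReal.ofReal (∑ j ∈ Finset.range (i + 1), Δ ^ j))) := by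
  classical
  set H := emulGraph G w A pv k with hHdef
  set d : V → V → ℝ≥0∞ := gdist G w with hddef
  set dH : V → V → ℝ≥0∞ := gdist H (gdist G w) with hdHdef
  set S : ℝ := ∑ j ∈ Finset.range i, Δ ^ j with hSdef
  set S' : ℝ := ∑ j ∈ Finset.range (i + 1), Δ ^ j with hS'def
  set DW : ℝ≥0∞ := Wxy * ENNReal.ofReal S with hDWdef
  set DW' : ℝ≥0∞ := Wxy * ENNReal.ofReal S' with hDW'def
  set c : ℝ := 2 * Δ / (Δ - 3) with hcdef
  set C : ℝ≥0∞ := ENNReal.ofReal c * DW with hCdef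
  have hΔ0 : (0:ℝ) < Δ := by linarith
  have h3 : (0:ℝ) < Δ - 3 := by linarith
  have hc0 : (0:ℝ) ≤ c := by positivity
  have hS0 : (0:ℝ) ≤ S := Finset.sum_nonneg fun j _ => pow_nonneg hΔ0.le j
  have hS'0 : (0:ℝ) ≤ S' := Finset.sum_nonneg fun j _ => pow_nonneg hΔ0.le j
  have hS'e : S' = S * Δ + 1 := by
    rw [hS'def, Finset.sum_range_succ', hSdef]
    simp [pow_succ, Finset.sum_mul]
  have hAmono : Antitone A := antitone_nat_of_succ_le hAnest
  have hHwsym : ∀ u v : V, H.Adj u v → gdist G w u v = gdist G w v u :=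
    fun u v _ => gdist_symm hwsym u v
  have hdHsymm : ∀ u v : V, dH u v = dH v u := fun u v => gdist_symm hHwsym u v
  have hd_le_dH : ∀ u v : V, d u v ≤ dH u v := fun u v =>
    gdist_le_gdist_of_walk gdist_self gdist_triangle
  have hdsymm : ∀ u v : V, d u v = d v u := fun u v => gdist_symm hwsym u v
  -- the pivot p at level i and its exact level ℓ
  set p : V := pv i x with hpdef
  obtain ⟨hpAi, _⟩ := hpv i hi x hAi
  have hdxp : d x p ≤ C := le_trans (hd_le_dH x p) hpiv
  obtain ⟨ℓ, hℓk, hpA, hpN⟩ := exists_level hA0 hAnest hAk p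
  have hiℓ : i ≤ ℓ := by
    by_contra h
    push_neg at h
    exact hpN (hAmono (by omega : ℓ + 1 ≤ i) hpAi)
  -- the pivot of y at level ℓ
  set v : V := pv ℓ y with hvdef
  obtain ⟨hvA, hvmin⟩ := hpv ℓ hℓk y ⟨p, hpA⟩
  have hdyv : d y v ≤ d x y + C := by
    calc d y v ≤ d y p := hvmin p hpA
      _ ≤ d y x + d x p := gdist_triangle _ _ _
      _ = d x y + d x p := by rw [hdsymm y x]
      _ ≤ d x y + C := add_le_add_right hdxp _
  have hdpv : d p v ≤ C + (d x y + (d x y + C)) := by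
    calc d p v ≤ d p x + d x v := gdist_triangle _ _ _
      _ ≤ d p x + (d x y + d y v) := add_le_add_right (gdist_triangle _ _ _) _
      _ = d x p + (d x y + d y v) := by rw [hdsymm p x]
      _ ≤ C + (d x y + (d x y + C)) :=
        add_le_add hdxp (add_le_add_right hdyv _)
  by_cases hcase : ∀ t ∈ A (ℓ + 1), d p v < d p t
  · -- case A : edge p-v exists, conclude disjunct 1
    left
    have hdHpv : dH p v ≤ d p v := by
      rcases eq_or_ne p v with h | hne
      · rw [h]
        exact le_trans (le_of_eq (gdist_self (G := H) (w := gdist G w) v)) zero_le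
      · have hadj : H.Adj p v := (⟨hne, ℓ, Or.inl ⟨hpA, hpN, Or.inl ⟨hvA, hcase⟩⟩⟩ : (emulGraph G w A pv k).Adj p v)
        exact gdist_adj_le hadj
    have hdHyv : dH y v ≤ d y v := by
      by_cases hyA : y ∈ A ℓ
      · have h0 : d y v = 0 :=
          le_antisymm (le_trans (hvmin y hyA) (le_of_eq (gdist_self y))) zero_le
        exact le_trans (le_of_eq (gdistH_zero hwsym hA0 hAnest hAk hpv y v h0)) zero_le
      · obtain ⟨ℓy, hℓyk, hyA', hyN'⟩ := exists_level hA0 hAnest hAk y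
        have hℓyℓ : ℓy < ℓ := by
          by_contra h
          push_neg at h
          exact hyA (hAmono h hyA')
        rcases eq_or_ne y v with h | hne
        · rw [h]
          exact le_trans (le_of_eq (gdist_self (G := H) (w := gdist G w) v)) zero_le
        · have hadj : H.Adj y v :=
            (⟨hne, ℓy, Or.inl ⟨hyA', hyN', Or.inr ⟨ℓ, hℓyℓ, hℓk, ⟨p, hpA⟩, rfl⟩⟩⟩ : (emulGraph G w A pv k).Adj y v)
          exact gdist_adj_le hadj
    have htot : dH x y ≤ (d x y + d x y + d x y) + (C + C + C + C) := by
      calc dH x y ≤ dH x v + dH v y := gdist_triangle _ _ _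
        _ ≤ (dH x p + dH p v) + dH y v := by
            rw [hdHsymm v y]
            exact add_le_add_left (gdist_triangle _ _ _) _
        _ ≤ (C + (C + (d x y + (d x y + C)))) + (d x y + C) :=
            add_le_add (add_le_add hpiv (le_trans hdHpv hdpv)) (le_trans hdHyv hdyv)
        _ = (d x y + d x y + d x y) + (C + C + C + C) := by ring
    refine le_trans htot ?_
    have hM3 : d x y + d x y + d x y ≤ ENNReal.ofReal 3 *
        max (ENNReal.ofReal Δ * DW) (d x y) := by
      have : d x y + d x y + d x y = ENNReal.ofReal 3 * d x y := by
        rw [ENNReal.ofReal_ofNat]; ring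
      rw [this]
      exact mul_le_mul_right (le_max_right _ _) _
    have hM4 : C + C + C + C ≤ ENNReal.ofReal (8 / (Δ - 3)) *
        max (ENNReal.ofReal Δ * DW) (d x y) := by
      have h4c : (8 / (Δ - 3) * Δ : ℝ) = 4 * c := by rw [hcdef]; field_simp; ring
      have h1 : C + C + C + C = ENNReal.ofReal (8 / (Δ - 3)) * (ENNReal.ofReal Δ * DW) := by
        calc C + C + C + C = 4 * C := by ring
          _ = ENNReal.ofReal 4 * (ENNReal.ofReal c * DW) := by rw [ENNReal.ofReal_ofNat, hCdef]
          _ = ENNReal.ofReal (4 * c) * DW := by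
              rw [ENNReal.ofReal_mul (by norm_num : (0:ℝ) ≤ 4), mul_assoc]
          _ = ENNReal.ofReal (8 / (Δ - 3) * Δ) * DW := by rw [h4c]
          _ = ENNReal.ofReal (8 / (Δ - 3)) * (ENNReal.ofReal Δ * DW) := by
              rw [ENNReal.ofReal_mul (by positivity : (0:ℝ) ≤ 8 / (Δ - 3)), mul_assoc]
      rw [h1]
      exact mul_le_mul_right (le_max_left _ _) _
    calc (d x y + d x y + d x y) + (C + C + C + C)
        ≤ ENNReal.ofReal 3 * max (ENNReal.ofReal Δ * DW) (d x y) +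
          ENNReal.ofReal (8 / (Δ - 3)) * max (ENNReal.ofReal Δ * DW) (d x y) :=
          add_le_add hM3 hM4
      _ = (ENNReal.ofReal 3 + ENNReal.ofReal (8 / (Δ - 3))) *
          max (ENNReal.ofReal Δ * DW) (d x y) := by ring
      _ = ENNReal.ofReal (3 + 8 / (Δ - 3)) * max (ENNReal.ofReal Δ * DW) (d x y) := by
          rw [ENNReal.ofReal_add (by norm_num) (by positivity)]
  · -- case B : pivot at level i+1 is close
    right
    push_neg at hcase
    obtain ⟨t, htA, htle⟩ := hcase
    have htA' : t ∈ A (i + 1) := hAmono (by omega : i + 1 ≤ ℓ + 1) htA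
    have hii : i + 1 < k := by
      rcases Nat.lt_or_ge (i + 1) k with h | h
      · exact h
      · exfalso
        have : A (i + 1) ⊆ A k := hAmono h
        rw [hAk] at this
        exact this htA'
    refine ⟨⟨t, htA'⟩, ?_⟩
    set z : V := pv (i + 1) x with hzdef
    obtain ⟨hzA, hzmin⟩ := hpv (i + 1) hii x ⟨t, htA'⟩
    -- arithmetic : 2 d + 3 C ≤ c * DW'
    have harith : (d x y + d x y) + (C + C + C) ≤ ENNReal.ofReal c * DW' := by
      have hkeyR : 2 * S' + 3 * (c * S) ≤ c * S' := by
        rw [hS'e, ← sub_nonneg]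
        have he : c * (S * Δ + 1) - (2 * (S * Δ + 1) + 3 * (c * S)) = 6 / (Δ - 3) := by
          rw [hcdef]; field_simp; ring
        rw [he]; positivity
      calc (d x y + d x y) + (C + C + C)
          ≤ (DW' + DW') + (C + C + C) :=
            add_le_add_left (add_le_add hclose hclose) _
        _ = Wxy * (ENNReal.ofReal 2 * ENNReal.ofReal S') +
            Wxy * (ENNReal.ofReal 3 * (ENNReal.ofReal c * ENNReal.ofReal S)) := by
            rw [hDW'def, hCdef, hDWdef, ENNReal.ofReal_ofNat, ENNReal.ofReal_ofNat]; ring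
        _ = Wxy * ENNReal.ofReal (2 * S' + 3 * (c * S)) := by
            rw [ENNReal.ofReal_add (mul_nonneg (by norm_num) hS'0)
                (mul_nonneg (by norm_num) (mul_nonneg hc0 hS0)),
              ENNReal.ofReal_mul (by norm_num : (0:ℝ) ≤ 2),
              ENNReal.ofReal_mul (by norm_num : (0:ℝ) ≤ 3),
              ENNReal.ofReal_mul hc0, mul_add]
        _ ≤ Wxy * ENNReal.ofReal (c * S') :=
            mul_le_mul_right (ENNReal.ofReal_le_ofReal hkeyR) _
        _ = ENNReal.ofReal c * DW' := by
            rw [ENNReal.ofReal_mul hc0, hDW'def]; ring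
    have hdxz : d x z ≤ (d x y + d x y) + (C + C + C) := by
      calc d x z ≤ d x t := hzmin t htA'
        _ ≤ d x p + d p t := gdist_triangle _ _ _
        _ ≤ C + d p v := add_le_add hdxp htle
        _ ≤ C + (C + (d x y + (d x y + C))) := add_le_add_right hdpv _
        _ = (d x y + d x y) + (C + C + C) := by ring
    by_cases hxA : x ∈ A (i + 1)
    · have h0 : d x z = 0 :=
        le_antisymm (le_trans (hzmin x hxA) (le_of_eq (gdist_self x))) zero_le
      exact le_trans (le_of_eq (gdistH_zero hwsym hA0 hAnest hAk hpv x z h0)) zero_le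
    · obtain ⟨ℓx, hℓxk, hxA', hxN'⟩ := exists_level hA0 hAnest hAk x
      have hℓxi : ℓx < i + 1 := by
        by_contra h
        push_neg at h
        exact hxA (hAmono h hxA')
      have hne : x ≠ z := fun he => hxA (he ▸ hzA)
      have hadj : H.Adj x z :=
        (⟨hne, ℓx, Or.inl ⟨hxA', hxN', Or.inr ⟨i + 1, hℓxi, hii, ⟨t, htA'⟩, rfl⟩⟩⟩ : (emulGraph G w A pv k).Adj x z)
      calc dH x z ≤ d x z := gdist_adj_le hadj
        _ ≤ (d x y + d x y) + (C + C + C) := hdxz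
        _ ≤ ENNReal.ofReal c * DW' := harith


end ASP
end

section
/- There is an absolute constant C such that the following holds. Let G = (V, E, w) be a finite connected undirected graph on n vertices with nonnegative real edge weights, let k ≥ 1 be an integer, set ν = 1/(2^k − 1) and q_i = n^{−2^i·ν} · 2^{−2^i − 1} for 0 ≤ i ≤ k−2. Construct random nested sets by A_0 = V and, for 0 ≤ i ≤ k−2, including each element of A_i in A_{i+1} independently with probability q_i; set A_k = ∅. With bunches B(u) defined from these sets and H = {{u, v} : u ∈ V, v ∈ B(u)}, the expected number of edges of H satisfies E[|H|] ≤ C · (k·n + n^{1+ν}). -/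
open scoped ENNReal Classical

namespace ASP

variable {V : Type*}

/-- The random hierarchy of sets determined by the coin flips `ω`: `A_0 = V`, and for
`i + 1 < k`, `A_{i+1}` consists of the elements `v ∈ A_i` whose coin `ω i v` came up `true`;
all levels from `k` on are empty. -/
def Asets (k : ℕ) (ω : ℕ → V → Bool) : ℕ → Set V
  | 0 => Set.univ
  | i + 1 => if i + 1 < k then {v | v ∈ Asets k ω i ∧ ω i v = true} else ∅

/-- Extend a finitely-indexed family of coin flips to all of `ℕ` (by `false`). -/
def extendCoins (k : ℕ) (ω : Fin (k - 1) → V → Bool) : ℕ → V → Bool :=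
  fun i v => if h : i < k - 1 then ω ⟨i, h⟩ v else false

/-- The probability of the outcome `ω` when, independently for each level `0 ≤ i ≤ k - 2` and
each vertex `v`, the coin `ω i v` comes up `true` with probability `qs i`. -/
noncomputable def coinProb [Fintype V] (k : ℕ) (qs : ℕ → ℝ)
    (ω : Fin (k - 1) → V → Bool) : ℝ :=
  ∏ i : Fin (k - 1), ∏ v : V, if ω i v = true then qs (i : ℕ) else 1 - qs (i : ℕ)




set_option linter.unusedSectionVars false
set_option maxHeartbeats 1000000


noncomputable def ind (P : Prop) : ℝ := if P then 1 else 0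

lemma ind_pos {P : Prop} (h : P) : ind P = 1 := by unfold ind; exact if_pos h
lemma ind_neg {P : Prop} (h : ¬ P) : ind P = 0 := by unfold ind; exact if_neg h
lemma ind_nonneg (P : Prop) : 0 ≤ ind P := by unfold ind; split_ifs <;> norm_num
lemma ind_le_one (P : Prop) : ind P ≤ 1 := by unfold ind; split_ifs <;> norm_num
lemma ind_mono {P Q : Prop} (h : P → Q) : ind P ≤ ind Q := by
  unfold ind; split_ifs with h1 h2 <;> first | exact absurd (h h1) h2 | norm_num

noncomputable def ite1 (P : Prop) (a : ℝ) : ℝ := if P then a else 1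

lemma ite1_pos {P : Prop} (h : P) (a : ℝ) : ite1 P a = a := by unfold ite1; exact if_pos h
lemma ite1_neg {P : Prop} (h : ¬ P) (a : ℝ) : ite1 P a = 1 := by unfold ite1; exact if_neg h

section Prob
variable {V : Type} [Fintype V] [DecidableEq V] {m : ℕ}

noncomputable def colP (q : ℕ → ℝ) (m : ℕ) (c : Fin m → Bool) : ℝ :=
  ∏ j : Fin m, if c j = true then q ((j : ℕ)) else 1 - q ((j : ℕ))

lemma colP_nonneg (q : ℕ → ℝ) (hq0 : ∀ j, 0 ≤ q j) (hq1 : ∀ j, q j ≤ 1)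
    (c : Fin m → Bool) : 0 ≤ colP q m c := by
  refine Finset.prod_nonneg fun j _ => ?_
  split_ifs
  · exact hq0 _
  · linarith [hq1 (j : ℕ)]

lemma sum_fn_prod {α β : Type*} [Fintype α] [DecidableEq α] [Fintype β]
    (g : α → β → ℝ) : ∑ f : α → β, ∏ a, g a (f a) = ∏ a, ∑ b, g a b :=
  (Fintype.prod_sum (κ := fun _ => β) g).symm

lemma ind_eq_prod (p : Fin m → Prop) (c : Fin m → Bool) :
    ind (∀ j, p j → c j = true) = ∏ j, ite1 (p j) (ind (c j = true)) := by
  by_cases h : ∀ j, p j → c j = true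
  · rw [ind_pos h]
    refine (Finset.prod_eq_one fun j _ => ?_).symm
    by_cases hp : p j
    · rw [ite1_pos hp, ind_pos (h j hp)]
    · rw [ite1_neg hp]
  · rw [ind_neg h]
    push_neg at h
    obtain ⟨j, hpj, hcj⟩ := h
    refine (Finset.prod_eq_zero (Finset.mem_univ j) ?_).symm
    rw [ite1_pos hpj, ind_neg hcj]

lemma sum_colP_all (q : ℕ → ℝ) (p : Fin m → Prop) :
    ∑ c : Fin m → Bool, colP q m c * ind (∀ j, p j → c j = true)
      = ∏ j : Fin m, ite1 (p j) (q ((j:ℕ))) := by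
  have key : ∀ c : Fin m → Bool,
      colP q m c * ind (∀ j, p j → c j = true)
        = ∏ j : Fin m, ((if c j = true then q (j:ℕ) else 1 - q (j:ℕ)) *
            ite1 (p j) (ind (c j = true))) := by
    intro c
    rw [ind_eq_prod p c]
    unfold colP
    rw [← Finset.prod_mul_distrib]
  rw [Finset.sum_congr rfl fun c _ => key c]
  rw [sum_fn_prod (fun (j : Fin m) (b : Bool) =>
    (if b = true then q (j:ℕ) else 1 - q (j:ℕ)) * ite1 (p j) (ind (b = true)))]
  refine Finset.prod_congr rfl fun j _ => ?_
  rw [Fintype.sum_bool]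
  by_cases hp : p j <;> simp [hp, ite1, ind]

lemma prod_fin_ite {i : ℕ} (hi : i ≤ m) (g : ℕ → ℝ) :
    (∏ j : Fin m, ite1 ((j:ℕ) < i) (g (j:ℕ))) = ∏ j ∈ Finset.range i, g j := by
  rw [Fin.prod_univ_eq_prod_range (fun t => ite1 (t < i) (g t)) m]
  rw [← Finset.prod_range_mul_prod_Ico _ hi]
  have h1 : ∏ j ∈ Finset.range i, ite1 (j < i) (g j) = ∏ j ∈ Finset.range i, g j :=
    Finset.prod_congr rfl fun j hj => ite1_pos (Finset.mem_range.mp hj) _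
  have h2 : ∏ j ∈ Finset.Ico i m, ite1 (j < i) (g j) = 1 :=
    Finset.prod_eq_one fun j hj => ite1_neg (by have := (Finset.mem_Ico.mp hj).1; omega) _
  rw [h1, h2, mul_one]

lemma sum_colP_one (q : ℕ → ℝ) :
    ∑ c : Fin m → Bool, colP q m c = 1 := by
  have h : ∀ c : Fin m → Bool, colP q m c = colP q m c * ind (∀ j : Fin m, False → c j = true) := by
    intro c; rw [ind_pos (fun j h => h.elim), mul_one]
  rw [Finset.sum_congr rfl fun c _ => h c, sum_colP_all q (fun _ => False)]
  exact Finset.prod_eq_one fun j _ => ite1_neg not_false _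

lemma sum_colP_cond1 (q : ℕ → ℝ) {i : ℕ} (hi : i ≤ m) :
    ∑ c : Fin m → Bool, colP q m c * ind (∀ j : Fin m, (j:ℕ) < i → c j = true)
      = ∏ j ∈ Finset.range i, q j := by
  exact (sum_colP_all (m := m) q (fun j => (j:ℕ) < i)).trans (prod_fin_ite hi q)

lemma sum_colP_cond3 (q : ℕ → ℝ) {i : ℕ} (hi : i < m) :
    ∑ c : Fin m → Bool, colP q m c *
        ind ((∀ j : Fin m, (j:ℕ) < i → c j = true) ∧ c ⟨i, hi⟩ = true)
      = ∏ j ∈ Finset.range (i + 1), q j := by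
  have hiff : ∀ c : Fin m → Bool,
      ind ((∀ j : Fin m, (j:ℕ) < i → c j = true) ∧ c ⟨i, hi⟩ = true)
        = ind (∀ j : Fin m, (j:ℕ) < i + 1 → c j = true) := by
    intro c
    have : ((∀ j : Fin m, (j:ℕ) < i → c j = true) ∧ c ⟨i, hi⟩ = true)
        ↔ (∀ j : Fin m, (j:ℕ) < i + 1 → c j = true) := by
      constructor
      · rintro ⟨h1, h2⟩ j hj
        rcases Nat.lt_succ_iff_lt_or_eq.mp hj with h | h
        · exact h1 j h
        · have : j = ⟨i, hi⟩ := Fin.ext h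
          rw [this]; exact h2
      · intro h
        exact ⟨fun j hj => h j (by omega), h ⟨i, hi⟩ (by simp)⟩
    by_cases h : (∀ j : Fin m, (j:ℕ) < i → c j = true) ∧ c ⟨i, hi⟩ = true
    · rw [ind_pos h, ind_pos (this.mp h)]
    · rw [ind_neg h, ind_neg fun hc => h (this.mpr hc)]
  rw [Finset.sum_congr rfl fun c _ => by rw [hiff c]]
  exact sum_colP_cond1 q (by omega)

lemma sum_colP_cond2 (q : ℕ → ℝ) {i : ℕ} (hi : i < m) :
    ∑ c : Fin m → Bool, colP q m c *
        ind ((∀ j : Fin m, (j:ℕ) < i → c j = true) ∧ c ⟨i, hi⟩ = false)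
      = (∏ j ∈ Finset.range i, q j) * (1 - q i) := by
  have key : ∀ c : Fin m → Bool,
      colP q m c * ind ((∀ j : Fin m, (j:ℕ) < i → c j = true) ∧ c ⟨i, hi⟩ = false)
        = colP q m c * ind (∀ j : Fin m, (j:ℕ) < i → c j = true)
          - colP q m c * ind ((∀ j : Fin m, (j:ℕ) < i → c j = true) ∧ c ⟨i, hi⟩ = true) := by
    intro c
    rw [← mul_sub]
    congr 1
    by_cases h1 : ∀ j : Fin m, (j:ℕ) < i → c j = true
    · rcases Bool.eq_false_or_eq_true (c ⟨i, hi⟩) with hb | hb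
      · rw [ind_neg (by simp [hb]), ind_pos h1, ind_pos ⟨h1, hb⟩]; norm_num
      · rw [ind_pos ⟨h1, hb⟩, ind_pos h1, ind_neg (by simp [hb])]; norm_num
    · rw [ind_neg (by tauto), ind_neg h1, ind_neg (by tauto)]; norm_num
  rw [Finset.sum_congr rfl fun c _ => key c, Finset.sum_sub_distrib,
    sum_colP_cond1 q hi.le, sum_colP_cond3 q hi, Finset.prod_range_succ]
  ring

lemma sum_colP_one_sub (q : ℕ → ℝ) {i : ℕ} (hi : i < m) :
    ∑ c : Fin m → Bool, colP q m c *
        (1 - ind ((∀ j : Fin m, (j:ℕ) < i → c j = true) ∧ c ⟨i, hi⟩ = true))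
      = 1 - ∏ j ∈ Finset.range (i + 1), q j := by
  have : ∀ c : Fin m → Bool, colP q m c *
        (1 - ind ((∀ j : Fin m, (j:ℕ) < i → c j = true) ∧ c ⟨i, hi⟩ = true))
      = colP q m c - colP q m c *
        ind ((∀ j : Fin m, (j:ℕ) < i → c j = true) ∧ c ⟨i, hi⟩ = true) := by
    intro c; ring
  rw [Finset.sum_congr rfl fun c _ => this c, Finset.sum_sub_distrib,
    sum_colP_one q, sum_colP_cond3 q hi]

end Prob

section ProbCore
variable {V : Type} [Fintype V] [DecidableEq V] {m : ℕ}


variable {V : Type} [Fintype V] [DecidableEq V] {m : ℕ}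



lemma coinProb_cols (q : ℕ → ℝ) (ω : Fin m → V → Bool) :
    coinProb (m + 1) q ω = ∏ v : V, colP q m (fun j => ω j v) := by
  unfold coinProb colP
  exact Finset.prod_comm

lemma coinProb_nonneg (q : ℕ → ℝ) (hq0 : ∀ j, 0 ≤ q j) (hq1 : ∀ j, q j ≤ 1)
    (ω : Fin m → V → Bool) : 0 ≤ coinProb (m + 1) q ω := by
  unfold coinProb
  refine Finset.prod_nonneg fun i _ => Finset.prod_nonneg fun v _ => ?_
  split_ifs
  · exact hq0 _
  · linarith [hq1 (i : ℕ)]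

lemma sum_cols (F : V → (Fin m → Bool) → ℝ) :
    ∑ ω : Fin m → V → Bool, ∏ v, F v (fun j => ω j v)
      = ∏ v, ∑ c : Fin m → Bool, F v c := by
  rw [← sum_fn_prod F]
  exact Fintype.sum_equiv
    ⟨Function.swap, Function.swap, fun _ => rfl, fun _ => rfl⟩ _ _ (fun ω => rfl)

lemma expectation_eq (q : ℕ → ℝ) (G : V → (Fin m → Bool) → ℝ) :
    ∑ ω : Fin m → V → Bool, coinProb (m + 1) q ω * ∏ v, G v (fun j => ω j v)
      = ∏ v, ∑ c : Fin m → Bool, colP q m c * G v c := by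
  have h1 : ∀ ω : Fin m → V → Bool,
      coinProb (m + 1) q ω * ∏ v, G v (fun j => ω j v)
        = ∏ v, (colP q m (fun j => ω j v) * G v (fun j => ω j v)) := by
    intro ω; rw [coinProb_cols, Finset.prod_mul_distrib]
  rw [Finset.sum_congr rfl (fun ω _ => h1 ω)]
  exact sum_cols (fun v c => colP q m c * G v c)


lemma sum_coinProb_one (q : ℕ → ℝ) :
    ∑ ω : Fin m → V → Bool, coinProb (m + 1) q ω = 1 := by
  have : ∀ ω : Fin m → V → Bool, coinProb (m + 1) q ω
      = ∏ v : V, (fun (v : V) (c : Fin m → Bool) => colP q m c) v (fun j => ω j v) :=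
    fun ω => coinProb_cols q ω
  rw [Finset.sum_congr rfl fun ω _ => this ω, sum_cols]
  rw [Finset.prod_eq_one fun v _ => sum_colP_one q]


end ProbCore
variable {V : Type*}



section AsetsLemmas
variable {m : ℕ}

lemma extendCoins_eq (ω : Fin m → V → Bool) {i : ℕ} (hi : i < m) (v : V) :
    extendCoins (m + 1) ω i v = ω ⟨i, hi⟩ v := by
  unfold extendCoins
  have h : i < m + 1 - 1 := by omega
  rw [dif_pos h]

lemma mem_Asets_iff (ω : Fin m → V → Bool) :
    ∀ i : ℕ, i ≤ m → ∀ u : V,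
      (u ∈ Asets (m + 1) (extendCoins (m + 1) ω) i ↔
        ∀ j : Fin m, (j : ℕ) < i → ω j u = true) := by
  intro i
  induction i with
  | zero => intro _ u; simp [Asets]
  | succ i ih =>
    intro hi u
    have him : i < m := by omega
    have hik : i + 1 < m + 1 := by omega
    have hstep : u ∈ Asets (m + 1) (extendCoins (m + 1) ω) (i + 1) ↔
        u ∈ Asets (m + 1) (extendCoins (m + 1) ω) i ∧
          extendCoins (m + 1) ω i u = true := by
      show u ∈ (if i + 1 < m + 1 then {v | v ∈ Asets (m + 1) (extendCoins (m + 1) ω) i ∧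
          extendCoins (m + 1) ω i v = true} else ∅) ↔ _
      rw [if_pos hik]
      exact Iff.rfl
    rw [hstep, ih (by omega) u, extendCoins_eq ω him u]
    constructor
    · rintro ⟨h1, h2⟩ j hj
      rcases Nat.lt_succ_iff_lt_or_eq.mp hj with h | h
      · exact h1 j h
      · have : j = ⟨i, him⟩ := Fin.ext h
        rw [this]; exact h2
    · intro h
      exact ⟨fun j hj => h j (by omega), h ⟨i, him⟩ (by simp)⟩

lemma Asets_eq_empty {k : ℕ} (ω : ℕ → V → Bool) {i : ℕ} (hk : k ≤ i) (hi : 0 < i) :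
    Asets k ω i = (∅ : Set V) := by
  obtain ⟨l, rfl⟩ : ∃ l, i = l + 1 := ⟨i - 1, by omega⟩
  show (if l + 1 < k then _ else ∅) = (∅ : Set V)
  rw [if_neg (by omega)]

lemma Asets_succ_subset {k : ℕ} (ω : ℕ → V → Bool) (i : ℕ) :
    Asets k ω (i + 1) ⊆ Asets k ω i := by
  intro x hx
  by_cases h : i + 1 < k
  · have : x ∈ (if i + 1 < k then {v | v ∈ Asets k ω i ∧ ω i v = true} else ∅) := hx
    rw [if_pos h] at this
    exact this.1
  · have : x ∈ (if i + 1 < k then {v | v ∈ Asets k ω i ∧ ω i v = true} else ∅) := hx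
    rw [if_neg h] at this
    exact absurd this (Set.notMem_empty x)

lemma Asets_subset {k : ℕ} (ω : ℕ → V → Bool) {i j : ℕ} (h : i ≤ j) :
    Asets k ω j ⊆ Asets k ω i := by
  induction j, h using Nat.le_induction with
  | base => exact subset_rfl
  | succ j hij ih => exact (Asets_succ_subset ω j).trans ih

end AsetsLemmas

/-- The geometric counting lemma. -/
lemma sum_pow_filter_le {α L : Type*} [DecidableEq α] [LinearOrder L]
    {t : ℝ} (ht0 : 0 < t) (ht1 : t ≤ 1) (f : α → L) (s : Finset α) :
    ∑ v ∈ s, (1 - t) ^ (s.filter (fun w => f w ≤ f v)).card ≤ 1 / t := by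
  induction s using Finset.strongInduction with
  | _ s ih =>
    rcases s.eq_empty_or_nonempty with rfl | hs
    · simp; positivity
    · obtain ⟨v0, hv0s, hv0⟩ := Finset.exists_min_image s f hs
      have hsub : s.erase v0 ⊂ s := Finset.erase_ssubset hv0s
      have key : ∀ v ∈ s.erase v0,
          (s.filter (fun w => f w ≤ f v)).card
            = ((s.erase v0).filter (fun w => f w ≤ f v)).card + 1 := by
        intro v hv
        have heq : s.filter (fun w => f w ≤ f v)
            = insert v0 ((s.erase v0).filter (fun w => f w ≤ f v)) := by
          ext x
          simp only [Finset.mem_filter, Finset.mem_insert, Finset.mem_erase]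
          constructor
          · rintro ⟨hxs, hfx⟩
            by_cases hx : x = v0
            · exact Or.inl hx
            · exact Or.inr ⟨⟨hx, hxs⟩, hfx⟩
          · rintro (rfl | ⟨⟨hx, hxs⟩, hfx⟩)
            · exact ⟨hv0s, hv0 v (Finset.mem_of_mem_erase hv)⟩
            · exact ⟨hxs, hfx⟩
        rw [heq, Finset.card_insert_of_notMem (by simp [Finset.mem_filter])]
      have h1t0 : (0:ℝ) ≤ 1 - t := by linarith
      have h1t1 : 1 - t ≤ 1 := by linarith
      rw [← Finset.sum_erase_add s _ hv0s]
      have hterm : (1 - t) ^ (s.filter (fun w => f w ≤ f v0)).card ≤ 1 - t := by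
        have hcard : 1 ≤ (s.filter (fun w => f w ≤ f v0)).card := by
          refine Finset.card_pos.mpr ⟨v0, ?_⟩
          exact Finset.mem_filter.mpr ⟨hv0s, le_refl _⟩
        calc (1 - t) ^ (s.filter (fun w => f w ≤ f v0)).card
            ≤ (1 - t) ^ 1 := pow_le_pow_of_le_one h1t0 h1t1 hcard
          _ = 1 - t := pow_one _
      have hsum : ∑ v ∈ s.erase v0, (1 - t) ^ (s.filter (fun w => f w ≤ f v)).card
          ≤ (1 - t) * (1 / t) := by
        have : ∑ v ∈ s.erase v0, (1 - t) ^ (s.filter (fun w => f w ≤ f v)).card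
            = ∑ v ∈ s.erase v0,
                (1 - t) ^ (((s.erase v0).filter (fun w => f w ≤ f v)).card) * (1 - t) := by
          refine Finset.sum_congr rfl fun v hv => ?_
          rw [key v hv, pow_succ]
        rw [this, ← Finset.sum_mul]
        have hih := ih (s.erase v0) hsub
        calc (∑ v ∈ s.erase v0,
                (1 - t) ^ ((s.erase v0).filter (fun w => f w ≤ f v)).card) * (1 - t)
            ≤ (1 / t) * (1 - t) := by
              apply mul_le_mul_of_nonneg_right hih h1t0
          _ = (1 - t) * (1 / t) := by ring
      calc ∑ v ∈ s.erase v0, (1 - t) ^ (s.filter (fun w => f w ≤ f v)).card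
            + (1 - t) ^ (s.filter (fun w => f w ≤ f v0)).card
          ≤ (1 - t) * (1 / t) + (1 - t) := by linarith
        _ ≤ 1 / t := by
            have ht : t * (1 / t) = 1 := by field_simp
            nlinarith [ht]


section EmidEtop
variable {V : Type} [Fintype V] [DecidableEq V] {m : ℕ}

lemma Emid (q : ℕ → ℝ) (hq0 : ∀ j, 0 < q j) (hq2 : ∀ j, q j ≤ 1 / 2)
    {i : ℕ} (him : i < m) (d : V → ℝ≥0∞) (u v : V) (huv : u ≠ v) :
    ∑ ω : Fin m → V → Bool,
        coinProb (m + 1) q ω *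
          ind (u ∈ Asets (m + 1) (extendCoins (m + 1) ω) i ∧
               v ∈ Asets (m + 1) (extendCoins (m + 1) ω) i ∧
               ∀ a ∈ Asets (m + 1) (extendCoins (m + 1) ω) (i + 1), d v < d a)
      ≤ 4 * (∏ j ∈ Finset.range i, q j) ^ 2 *
          (1 - ∏ j ∈ Finset.range (i + 1), q j) ^
            (Finset.univ.filter fun x => d x ≤ d v).card := by
  classical
  have hq1 : ∀ j, q j ≤ 1 := fun j => (hq2 j).trans (by norm_num)
  set p1 : ℝ := ∏ j ∈ Finset.range i, q j with hp1def
  set t : ℝ := ∏ j ∈ Finset.range (i + 1), q j with htdef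
  have hp1pos : 0 < p1 := Finset.prod_pos fun j _ => hq0 j
  have hp1le : p1 ≤ 1 := Finset.prod_le_one (fun j _ => (hq0 j).le) fun j _ => hq1 j
  have htpos : 0 < t := Finset.prod_pos fun j _ => hq0 j
  have htle : t ≤ 1 / 2 := by
    rw [htdef, Finset.prod_range_succ]
    calc p1 * q i ≤ 1 * (1 / 2) :=
          mul_le_mul hp1le (hq2 i) (hq0 i).le zero_le_one
      _ = 1 / 2 := by norm_num
  set GG : V → (Fin m → Bool) → ℝ := fun x c =>
    if x = v then ind ((∀ j : Fin m, (j : ℕ) < i → c j = true) ∧ c ⟨i, him⟩ = false)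
    else if x = u then ind (∀ j : Fin m, (j : ℕ) < i → c j = true)
    else if d x ≤ d v then
      1 - ind ((∀ j : Fin m, (j : ℕ) < i → c j = true) ∧ c ⟨i, him⟩ = true)
    else 1
    with hGG
  have hGnn : ∀ x c, 0 ≤ GG x c := by
    intro x c
    rw [hGG]; dsimp only
    split_ifs <;> first
      | exact ind_nonneg _
      | linarith [ind_le_one ((∀ j : Fin m, (j : ℕ) < i → c j = true) ∧ c ⟨i, him⟩ = true)]
      | norm_num
  have step1 : ∀ ω : Fin m → V → Bool,
      ind (u ∈ Asets (m + 1) (extendCoins (m + 1) ω) i ∧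
          v ∈ Asets (m + 1) (extendCoins (m + 1) ω) i ∧
          ∀ a ∈ Asets (m + 1) (extendCoins (m + 1) ω) (i + 1), d v < d a)
        ≤ ∏ x : V, GG x (fun j => ω j x) := by
    intro ω
    by_cases hE : (u ∈ Asets (m + 1) (extendCoins (m + 1) ω) i ∧
        v ∈ Asets (m + 1) (extendCoins (m + 1) ω) i ∧
        ∀ a ∈ Asets (m + 1) (extendCoins (m + 1) ω) (i + 1), d v < d a)
    · rw [ind_pos hE]
      obtain ⟨hu, hv, hclose⟩ := hE
      refine le_of_eq (Finset.prod_eq_one fun x _ => ?_).symm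
      rw [hGG]; dsimp only
      by_cases hxv : x = v
      · rw [if_pos hxv]
        subst hxv
        refine ind_pos ⟨(mem_Asets_iff ω i him.le x).mp hv, ?_⟩
        rcases Bool.eq_false_or_eq_true (ω ⟨i, him⟩ x) with hb | hb
        · -- true case : contradiction
          exfalso
          have hmem : x ∈ Asets (m + 1) (extendCoins (m + 1) ω) (i + 1) := by
            rw [mem_Asets_iff ω (i + 1) (by omega) x]
            intro j hj
            rcases Nat.lt_succ_iff_lt_or_eq.mp hj with h | h
            · exact (mem_Asets_iff ω i him.le x).mp hv j h
            · have : j = ⟨i, him⟩ := Fin.ext h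
              rw [this]; exact hb
          exact lt_irrefl _ (hclose x hmem)
        · exact hb
      · rw [if_neg hxv]
        by_cases hxu : x = u
        · rw [if_pos hxu]
          subst hxu
          exact ind_pos ((mem_Asets_iff ω i him.le x).mp hu)
        · rw [if_neg hxu]
          by_cases hdx : d x ≤ d v
          · rw [if_pos hdx]
            have : ¬ ((∀ j : Fin m, (j : ℕ) < i → ω j x = true) ∧ ω ⟨i, him⟩ x = true) := by
              rintro ⟨h1, h2⟩
              have hmem : x ∈ Asets (m + 1) (extendCoins (m + 1) ω) (i + 1) := by
                rw [mem_Asets_iff ω (i + 1) (by omega) x]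
                intro j hj
                rcases Nat.lt_succ_iff_lt_or_eq.mp hj with h | h
                · exact h1 j h
                · have : j = ⟨i, him⟩ := Fin.ext h
                  rw [this]; exact h2
              exact absurd hdx (not_le.mpr (hclose x hmem))
            rw [ind_neg this, sub_zero]
          · rw [if_neg hdx]
    · rw [ind_neg hE]
      exact Finset.prod_nonneg fun x _ => hGnn x _
  have step2 : ∑ ω : Fin m → V → Bool,
      coinProb (m + 1) q ω *
        ind (u ∈ Asets (m + 1) (extendCoins (m + 1) ω) i ∧
            v ∈ Asets (m + 1) (extendCoins (m + 1) ω) i ∧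
            ∀ a ∈ Asets (m + 1) (extendCoins (m + 1) ω) (i + 1), d v < d a)
      ≤ ∑ ω : Fin m → V → Bool, coinProb (m + 1) q ω * ∏ x : V, GG x (fun j => ω j x) :=
    Finset.sum_le_sum fun ω _ => mul_le_mul_of_nonneg_left (step1 ω)
      (coinProb_nonneg q (fun j => (hq0 j).le) hq1 ω)
  refine step2.trans ?_
  rw [expectation_eq q GG]
  -- evaluate each factor
  have hval : ∀ x : V, (∑ c : Fin m → Bool, colP q m c * GG x c)
      = if x = v then p1 * (1 - q i) else if x = u then p1
        else if d x ≤ d v then 1 - t else 1 := by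
    intro x
    by_cases hxv : x = v
    · rw [if_pos hxv]
      have hc : ∀ c : Fin m → Bool, GG x c
          = ind ((∀ j : Fin m, (j : ℕ) < i → c j = true) ∧ c ⟨i, him⟩ = false) := by
        intro c; rw [hGG]; dsimp only; rw [if_pos hxv]
      calc ∑ c : Fin m → Bool, colP q m c * GG x c
          = ∑ c : Fin m → Bool, colP q m c *
              ind ((∀ j : Fin m, (j : ℕ) < i → c j = true) ∧ c ⟨i, him⟩ = false) :=
            Finset.sum_congr rfl fun c _ => by rw [hc c]
        _ = p1 * (1 - q i) := sum_colP_cond2 q him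
    · rw [if_neg hxv]
      by_cases hxu : x = u
      · rw [if_pos hxu]
        have hc : ∀ c : Fin m → Bool, GG x c
            = ind (∀ j : Fin m, (j : ℕ) < i → c j = true) := by
          intro c; rw [hGG]; dsimp only; rw [if_neg hxv, if_pos hxu]
        calc ∑ c : Fin m → Bool, colP q m c * GG x c
            = ∑ c : Fin m → Bool, colP q m c *
                ind (∀ j : Fin m, (j : ℕ) < i → c j = true) :=
              Finset.sum_congr rfl fun c _ => by rw [hc c]
          _ = p1 := sum_colP_cond1 q him.le
      · rw [if_neg hxu]
        by_cases hdx : d x ≤ d v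
        · rw [if_pos hdx]
          have hc : ∀ c : Fin m → Bool, GG x c
              = 1 - ind ((∀ j : Fin m, (j : ℕ) < i → c j = true) ∧ c ⟨i, him⟩ = true) := by
            intro c; rw [hGG]; dsimp only; rw [if_neg hxv, if_neg hxu, if_pos hdx]
          calc ∑ c : Fin m → Bool, colP q m c * GG x c
              = ∑ c : Fin m → Bool, colP q m c *
                  (1 - ind ((∀ j : Fin m, (j : ℕ) < i → c j = true) ∧ c ⟨i, him⟩ = true)) :=
                Finset.sum_congr rfl fun c _ => by rw [hc c]
            _ = 1 - t := sum_colP_one_sub q him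
        · rw [if_neg hdx]
          have hc : ∀ c : Fin m → Bool, GG x c = 1 := by
            intro c; rw [hGG]; dsimp only; rw [if_neg hxv, if_neg hxu, if_neg hdx]
          calc ∑ c : Fin m → Bool, colP q m c * GG x c
              = ∑ c : Fin m → Bool, colP q m c :=
                Finset.sum_congr rfl fun c _ => by rw [hc c, mul_one]
            _ = 1 := sum_colP_one q
  rw [Finset.prod_congr rfl fun x _ => hval x]
  -- peel off the v and u factors
  set F : V → ℝ := fun x => if x = v then p1 * (1 - q i) else if x = u then p1
    else if d x ≤ d v then 1 - t else 1 with hF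
  have h1 : ∏ x : V, F x = F v * ∏ x ∈ Finset.univ.erase v, F x :=
    (Finset.mul_prod_erase Finset.univ F (Finset.mem_univ v)).symm
  have huv' : u ∈ Finset.univ.erase v := Finset.mem_erase.mpr ⟨huv, Finset.mem_univ u⟩
  have h2 : ∏ x ∈ Finset.univ.erase v, F x
      = F u * ∏ x ∈ (Finset.univ.erase v).erase u, F x :=
    (Finset.mul_prod_erase _ F huv').symm
  have hFv : F v = p1 * (1 - q i) := by rw [hF]; dsimp only; rw [if_pos rfl]
  have hFu : F u = p1 := by rw [hF]; dsimp only; rw [if_neg huv, if_pos rfl]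
  have h3 : ∏ x ∈ (Finset.univ.erase v).erase u, F x
      = (1 - t) ^ (((Finset.univ.erase v).erase u).filter fun x => d x ≤ d v).card := by
    have : ∀ x ∈ (Finset.univ.erase v).erase u, F x = if d x ≤ d v then 1 - t else 1 := by
      intro x hx
      have hxu : x ≠ u := (Finset.mem_erase.mp hx).1
      have hxv : x ≠ v := (Finset.mem_erase.mp (Finset.mem_of_mem_erase hx)).1
      rw [hF]; dsimp only; rw [if_neg hxv, if_neg hxu]
    rw [Finset.prod_congr rfl this, ← Finset.prod_filter, Finset.prod_const]
  rw [h1, h2, h3, hFv, hFu]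
  -- final numeric comparison
  set c2 : ℕ := (((Finset.univ.erase v).erase u).filter fun x => d x ≤ d v).card with hc2
  set c1 : ℕ := (Finset.univ.filter fun x : V => d x ≤ d v).card with hc1
  have hcc : c1 ≤ c2 + 2 := by
    have hsub : (Finset.univ.filter fun x : V => d x ≤ d v)
        ⊆ insert v (insert u (((Finset.univ.erase v).erase u).filter fun x => d x ≤ d v)) := by
      intro x hx
      by_cases hxv : x = v
      · exact Finset.mem_insert.mpr (Or.inl hxv)
      · by_cases hxu : x = u
        · exact Finset.mem_insert.mpr (Or.inr (Finset.mem_insert.mpr (Or.inl hxu)))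
        · refine Finset.mem_insert.mpr (Or.inr (Finset.mem_insert.mpr (Or.inr ?_)))
          refine Finset.mem_filter.mpr ⟨?_, (Finset.mem_filter.mp hx).2⟩
          exact Finset.mem_erase.mpr ⟨hxu, Finset.mem_erase.mpr ⟨hxv, Finset.mem_univ x⟩⟩
    calc c1 ≤ (insert v (insert u (((Finset.univ.erase v).erase u).filter
            fun x => d x ≤ d v))).card := Finset.card_le_card hsub
      _ ≤ (insert u (((Finset.univ.erase v).erase u).filter
            fun x => d x ≤ d v)).card + 1 := Finset.card_insert_le _ _
      _ ≤ c2 + 2 := by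
          have := Finset.card_insert_le u (((Finset.univ.erase v).erase u).filter
            fun x => d x ≤ d v)
          omega
  have h1t0 : (0:ℝ) ≤ 1 - t := by linarith
  have h1t1 : (1:ℝ) - t ≤ 1 := by linarith
  have hpow : (1 - t) ^ c2 ≤ 4 * (1 - t) ^ c1 := by
    have ha : (1/2:ℝ) ≤ 1 - t := by linarith
    have hb : (1/4:ℝ) ≤ (1 - t)^2 := by nlinarith
    have hc : (1 - t) ^ c2 * (1 - t) ^ 2 = (1 - t) ^ (c2 + 2) := (pow_add _ _ _).symm
    have hd : (1 - t) ^ (c2 + 2) ≤ (1 - t) ^ c1 := pow_le_pow_of_le_one h1t0 h1t1 hcc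
    have he : (0:ℝ) ≤ (1 - t) ^ c2 := pow_nonneg h1t0 _
    nlinarith [mul_le_mul_of_nonneg_left hb he]
  have hq0i := hq0 i
  have hq1i := hq1 i
  have hcnn : (0:ℝ) ≤ (1 - t) ^ c1 := pow_nonneg h1t0 _
  have hcnn2 : (0:ℝ) ≤ (1 - t) ^ c2 := pow_nonneg h1t0 _
  calc p1 * (1 - q i) * (p1 * (1 - t) ^ c2)
      ≤ p1 * 1 * (p1 * (4 * (1 - t) ^ c1)) := by
        apply mul_le_mul
        · nlinarith
        · exact mul_le_mul_of_nonneg_left hpow hp1pos.le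
        · positivity
        · nlinarith
    _ = 4 * p1 ^ 2 * (1 - t) ^ c1 := by ring

lemma Etop (q : ℕ → ℝ) (hq0 : ∀ j, 0 ≤ q j) (hq1 : ∀ j, q j ≤ 1)
    (u v : V) (huv : u ≠ v) :
    ∑ ω : Fin m → V → Bool,
        coinProb (m + 1) q ω *
          ind (u ∈ Asets (m + 1) (extendCoins (m + 1) ω) m ∧
               v ∈ Asets (m + 1) (extendCoins (m + 1) ω) m)
      ≤ (∏ j ∈ Finset.range m, q j) ^ 2 := by
  classical
  set GG : V → (Fin m → Bool) → ℝ := fun x c =>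
    if x = v then ind (∀ j : Fin m, (j : ℕ) < m → c j = true)
    else if x = u then ind (∀ j : Fin m, (j : ℕ) < m → c j = true)
    else 1
    with hGG
  have hGnn : ∀ x c, 0 ≤ GG x c := by
    intro x c; rw [hGG]; dsimp only
    split_ifs <;> first | exact ind_nonneg _ | norm_num
  have step1 : ∀ ω : Fin m → V → Bool,
      ind (u ∈ Asets (m + 1) (extendCoins (m + 1) ω) m ∧
          v ∈ Asets (m + 1) (extendCoins (m + 1) ω) m)
        ≤ ∏ x : V, GG x (fun j => ω j x) := by
    intro ω
    by_cases hE : (u ∈ Asets (m + 1) (extendCoins (m + 1) ω) m ∧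
        v ∈ Asets (m + 1) (extendCoins (m + 1) ω) m)
    · rw [ind_pos hE]
      refine le_of_eq (Finset.prod_eq_one fun x _ => ?_).symm
      rw [hGG]; dsimp only
      by_cases hxv : x = v
      · rw [if_pos hxv]; subst hxv
        exact ind_pos ((mem_Asets_iff ω m le_rfl x).mp hE.2)
      · rw [if_neg hxv]
        by_cases hxu : x = u
        · rw [if_pos hxu]; subst hxu
          exact ind_pos ((mem_Asets_iff ω m le_rfl x).mp hE.1)
        · rw [if_neg hxu]
    · rw [ind_neg hE]
      exact Finset.prod_nonneg fun x _ => hGnn x _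
  have step2 : ∑ ω : Fin m → V → Bool,
      coinProb (m + 1) q ω *
        ind (u ∈ Asets (m + 1) (extendCoins (m + 1) ω) m ∧
            v ∈ Asets (m + 1) (extendCoins (m + 1) ω) m)
      ≤ ∑ ω : Fin m → V → Bool, coinProb (m + 1) q ω * ∏ x : V, GG x (fun j => ω j x) :=
    Finset.sum_le_sum fun ω _ => mul_le_mul_of_nonneg_left (step1 ω)
      (coinProb_nonneg q hq0 hq1 ω)
  refine step2.trans ?_
  rw [expectation_eq q GG]
  have hval : ∀ x : V, (∑ c : Fin m → Bool, colP q m c * GG x c)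
      = if x = v then ∏ j ∈ Finset.range m, q j
        else if x = u then ∏ j ∈ Finset.range m, q j else 1 := by
    intro x
    by_cases hxv : x = v
    · rw [if_pos hxv]
      have hc : ∀ c : Fin m → Bool, GG x c = ind (∀ j : Fin m, (j : ℕ) < m → c j = true) := by
        intro c; rw [hGG]; dsimp only; rw [if_pos hxv]
      calc ∑ c : Fin m → Bool, colP q m c * GG x c
          = ∑ c : Fin m → Bool, colP q m c * ind (∀ j : Fin m, (j : ℕ) < m → c j = true) :=
            Finset.sum_congr rfl fun c _ => by rw [hc c]
        _ = ∏ j ∈ Finset.range m, q j := sum_colP_cond1 q le_rfl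
    · rw [if_neg hxv]
      by_cases hxu : x = u
      · rw [if_pos hxu]
        have hc : ∀ c : Fin m → Bool, GG x c
            = ind (∀ j : Fin m, (j : ℕ) < m → c j = true) := by
          intro c; rw [hGG]; dsimp only; rw [if_neg hxv, if_pos hxu]
        calc ∑ c : Fin m → Bool, colP q m c * GG x c
            = ∑ c : Fin m → Bool, colP q m c * ind (∀ j : Fin m, (j : ℕ) < m → c j = true) :=
              Finset.sum_congr rfl fun c _ => by rw [hc c]
          _ = ∏ j ∈ Finset.range m, q j := sum_colP_cond1 q le_rfl
      · rw [if_neg hxu]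
        have hc : ∀ c : Fin m → Bool, GG x c = 1 := by
          intro c; rw [hGG]; dsimp only; rw [if_neg hxv, if_neg hxu]
        calc ∑ c : Fin m → Bool, colP q m c * GG x c
            = ∑ c : Fin m → Bool, colP q m c :=
              Finset.sum_congr rfl fun c _ => by rw [hc c, mul_one]
          _ = 1 := sum_colP_one q
  rw [Finset.prod_congr rfl fun x _ => hval x]
  set pm : ℝ := ∏ j ∈ Finset.range m, q j with hpm
  have hpmnn : 0 ≤ pm := Finset.prod_nonneg fun j _ => hq0 j
  set F : V → ℝ := fun x => if x = v then pm else if x = u then pm else 1 with hF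
  have h1 : ∏ x : V, F x = F v * ∏ x ∈ Finset.univ.erase v, F x :=
    (Finset.mul_prod_erase Finset.univ F (Finset.mem_univ v)).symm
  have huv' : u ∈ Finset.univ.erase v := Finset.mem_erase.mpr ⟨huv, Finset.mem_univ u⟩
  have h2 : ∏ x ∈ Finset.univ.erase v, F x
      = F u * ∏ x ∈ (Finset.univ.erase v).erase u, F x :=
    (Finset.mul_prod_erase _ F huv').symm
  have hFv : F v = pm := by rw [hF]; dsimp only; rw [if_pos rfl]
  have hFu : F u = pm := by rw [hF]; dsimp only; rw [if_neg huv, if_pos rfl]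
  have h3 : ∏ x ∈ (Finset.univ.erase v).erase u, F x = 1 := by
    refine Finset.prod_eq_one fun x hx => ?_
    have hxu : x ≠ u := (Finset.mem_erase.mp hx).1
    have hxv : x ≠ v := (Finset.mem_erase.mp (Finset.mem_of_mem_erase hx)).1
    rw [hF]; dsimp only; rw [if_neg hxv, if_neg hxu]
  rw [h1, h2, h3, hFv, hFu]
  rw [mul_one, ← pow_two]

lemma Esum_ind_le_one (q : ℕ → ℝ) (hq0 : ∀ j, 0 ≤ q j) (hq1 : ∀ j, q j ≤ 1)
    (E : (Fin m → V → Bool) → Prop) :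
    ∑ ω : Fin m → V → Bool, coinProb (m + 1) q ω * ind (E ω) ≤ 1 := by
  calc ∑ ω : Fin m → V → Bool, coinProb (m + 1) q ω * ind (E ω)
      ≤ ∑ ω : Fin m → V → Bool, coinProb (m + 1) q ω :=
        Finset.sum_le_sum fun ω _ =>
          mul_le_of_le_one_right (coinProb_nonneg q hq0 hq1 ω) (ind_le_one _)
    _ = 1 := sum_coinProb_one q

end EmidEtop



lemma ind_le_add {P Q R : Prop} (h : P → Q ∨ R) : ind P ≤ ind Q + ind R := by
  by_cases hp : P
  · rw [ind_pos hp]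
    rcases h hp with hq | hr
    · rw [ind_pos hq]; linarith [ind_nonneg R]
    · rw [ind_pos hr]; linarith [ind_nonneg Q]
  · rw [ind_neg hp]; linarith [ind_nonneg Q, ind_nonneg R]

lemma sum_ind_card {α : Type*} (s : Finset α) (P : α → Prop) :
    ∑ a ∈ s, ind (P a) = (((s.filter P).card : ℕ) : ℝ) := by
  classical
  rw [Finset.card_filter, Nat.cast_sum]
  refine Finset.sum_congr rfl fun a _ => ?_
  unfold ind; split_ifs <;> simp

section EdgeCount
variable {V : Type} [Fintype V] [DecidableEq V]

lemma edge_count (G : SimpleGraph V) (w : V → V → ℝ≥0∞) (A : ℕ → Set V)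
    (pvf : ℕ → V → V) (k : ℕ)
    (hA : ∀ i j, i ≤ j → A j ⊆ A i) (hAk : ∀ i, k ≤ i → A i = ∅) :
    (((emulGraph G w A pvf k).edgeSet.ncard : ℕ) : ℝ)
      ≤ k * Fintype.card V +
        ∑ i ∈ Finset.range k, ∑ u : V, ∑ v : V,
          ind (u ∈ A i ∧ v ∈ A i ∧ ∀ a ∈ A (i + 1), gdist G w u v < gdist G w u a) := by
  classical
  set pred : ℕ × V × V → Prop := fun z =>
    z.2.1 ∈ A z.1 ∧ z.2.1 ∉ A (z.1 + 1) ∧ z.2.2 ∈ bunch G w A pvf k z.1 z.2.1 with hpred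
  set T : Finset (ℕ × V × V) :=
    ((Finset.range k) ×ˢ (Finset.univ ×ˢ Finset.univ)).filter pred with hT
  have hsub : (emulGraph G w A pvf k).edgeSet ⊆ ↑(T.image fun z => s(z.2.1, z.2.2)) := by
    intro e he
    refine Sym2.ind (fun u v huv => ?_) e he
    rw [SimpleGraph.mem_edgeSet] at huv
    obtain ⟨hne, i, hcase⟩ := huv
    have hik : ∀ x : V, x ∈ A i → i < k := by
      intro x hx
      by_contra hik
      rw [hAk i (by omega)] at hx
      exact hx
    rcases hcase with ⟨hu, hu1, hv⟩ | ⟨hv, hv1, hu⟩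
    · have hmem : (i, u, v) ∈ T := by
        refine Finset.mem_filter.mpr ⟨?_, ⟨hu, hu1, hv⟩⟩
        exact Finset.mem_product.mpr ⟨Finset.mem_range.mpr (hik u hu),
          Finset.mem_product.mpr ⟨Finset.mem_univ _, Finset.mem_univ _⟩⟩
      exact Finset.mem_coe.mpr (Finset.mem_image.mpr ⟨(i, u, v), hmem, rfl⟩)
    · have hmem : (i, v, u) ∈ T := by
        refine Finset.mem_filter.mpr ⟨?_, ⟨hv, hv1, hu⟩⟩
        exact Finset.mem_product.mpr ⟨Finset.mem_range.mpr (hik v hv),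
          Finset.mem_product.mpr ⟨Finset.mem_univ _, Finset.mem_univ _⟩⟩
      exact Finset.mem_coe.mpr (Finset.mem_image.mpr ⟨(i, v, u), hmem, Sym2.eq_swap⟩)
  have hcard : (((emulGraph G w A pvf k).edgeSet.ncard : ℕ) : ℝ) ≤ (T.card : ℝ) := by
    have h1 : (emulGraph G w A pvf k).edgeSet.ncard
        ≤ (T.image fun z => s(z.2.1, z.2.2)).card := by
      have h2 := Set.ncard_le_ncard hsub (Finset.finite_toSet _)
      rwa [Set.ncard_coe_finset] at h2
    exact_mod_cast h1.trans Finset.card_image_le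
  refine hcard.trans ?_
  have hTsum : (T.card : ℝ) = ∑ i ∈ Finset.range k, ∑ u : V, ∑ v : V, ind (pred (i, u, v)) := by
    rw [hT, Finset.card_filter, Nat.cast_sum, Finset.sum_product]
    refine Finset.sum_congr rfl fun i _ => ?_
    rw [Finset.sum_product]
    refine Finset.sum_congr rfl fun u _ => Finset.sum_congr rfl fun v _ => ?_
    unfold ind; split_ifs <;> simp
  rw [hTsum]
  -- split off pivots
  have hsplit : ∀ i u v, ind (pred (i, u, v))
      ≤ ind ((u ∈ A i ∧ u ∉ A (i + 1)) ∧
            ∃ j, i < j ∧ j < k ∧ (A j).Nonempty ∧ v = pvf j u)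
        + ind (u ∈ A i ∧ v ∈ A i ∧ ∀ a ∈ A (i + 1), gdist G w u v < gdist G w u a) := by
    intro i u v
    refine ind_le_add ?_
    rintro ⟨hu, hu1, hv⟩
    rcases hv with h1 | h2
    · exact Or.inr ⟨hu, h1.1, h1.2⟩
    · exact Or.inl ⟨⟨hu, hu1⟩, h2⟩
  have hpivsum : ∀ i u, (∑ v : V, ind ((u ∈ A i ∧ u ∉ A (i + 1)) ∧
        ∃ j, i < j ∧ j < k ∧ (A j).Nonempty ∧ v = pvf j u))
      ≤ ind (u ∈ A i ∧ u ∉ A (i + 1)) * k := by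
    intro i u
    by_cases hu : u ∈ A i ∧ u ∉ A (i + 1)
    · rw [ind_pos hu, one_mul]
      calc ∑ v : V, ind ((u ∈ A i ∧ u ∉ A (i + 1)) ∧
              ∃ j, i < j ∧ j < k ∧ (A j).Nonempty ∧ v = pvf j u)
          ≤ ∑ v : V, ind (∃ j, i < j ∧ j < k ∧ (A j).Nonempty ∧ v = pvf j u) :=
            Finset.sum_le_sum fun v _ => ind_mono fun h => h.2
        _ = ((Finset.univ.filter fun v : V =>
              ∃ j, i < j ∧ j < k ∧ (A j).Nonempty ∧ v = pvf j u).card : ℝ) :=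
            sum_ind_card _ _
        _ ≤ (k : ℝ) := by
            have hsub2 : (Finset.univ.filter fun v : V =>
                ∃ j, i < j ∧ j < k ∧ (A j).Nonempty ∧ v = pvf j u)
                ⊆ (Finset.Ico (i + 1) k).image fun j => pvf j u := by
              intro x hx
              obtain ⟨j, hj1, hj2, _, hx⟩ := (Finset.mem_filter.mp hx).2
              exact Finset.mem_image.mpr ⟨j, Finset.mem_Ico.mpr ⟨by omega, hj2⟩, hx.symm⟩
            have h3 := (Finset.card_le_card hsub2).trans Finset.card_image_le
            rw [Nat.card_Ico] at h3
            exact_mod_cast h3.trans (by omega)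
    · rw [ind_neg hu, zero_mul]
      refine le_of_eq (Finset.sum_eq_zero fun v _ => ind_neg fun hc => hu hc.1)
  have hlvl : ∀ u : V, (∑ i ∈ Finset.range k, ind (u ∈ A i ∧ u ∉ A (i + 1))) ≤ 1 := by
    intro u
    rw [sum_ind_card]
    refine Nat.cast_le_one.mpr (Finset.card_le_one.mpr ?_)
    intro a ha b hb
    simp only [Finset.mem_filter] at ha hb
    have ha' := ha.2
    have hb' := hb.2
    by_contra hne
    rcases Nat.lt_or_ge a b with h | h
    · exact ha'.2 (hA (a + 1) b (by omega) hb'.1)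
    · exact hb'.2 (hA (b + 1) a (by omega) ha'.1)
  calc ∑ i ∈ Finset.range k, ∑ u : V, ∑ v : V, ind (pred (i, u, v))
      ≤ ∑ i ∈ Finset.range k, ∑ u : V,
          (ind (u ∈ A i ∧ u ∉ A (i + 1)) * k +
            ∑ v : V, ind (u ∈ A i ∧ v ∈ A i ∧
              ∀ a ∈ A (i + 1), gdist G w u v < gdist G w u a)) := by
        refine Finset.sum_le_sum fun i _ => Finset.sum_le_sum fun u _ => ?_
        calc ∑ v : V, ind (pred (i, u, v))
            ≤ ∑ v : V, (ind ((u ∈ A i ∧ u ∉ A (i + 1)) ∧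
                  ∃ j, i < j ∧ j < k ∧ (A j).Nonempty ∧ v = pvf j u)
                + ind (u ∈ A i ∧ v ∈ A i ∧
                    ∀ a ∈ A (i + 1), gdist G w u v < gdist G w u a)) :=
              Finset.sum_le_sum fun v _ => hsplit i u v
          _ = (∑ v : V, ind ((u ∈ A i ∧ u ∉ A (i + 1)) ∧
                  ∃ j, i < j ∧ j < k ∧ (A j).Nonempty ∧ v = pvf j u))
              + ∑ v : V, ind (u ∈ A i ∧ v ∈ A i ∧
                  ∀ a ∈ A (i + 1), gdist G w u v < gdist G w u a) :=
              Finset.sum_add_distrib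
          _ ≤ _ := by
              exact add_le_add_left (hpivsum i u) _
    _ = (∑ i ∈ Finset.range k, ∑ u : V, ind (u ∈ A i ∧ u ∉ A (i + 1)) * k)
        + ∑ i ∈ Finset.range k, ∑ u : V, ∑ v : V,
            ind (u ∈ A i ∧ v ∈ A i ∧ ∀ a ∈ A (i + 1), gdist G w u v < gdist G w u a) := by
        rw [← Finset.sum_add_distrib]
        refine Finset.sum_congr rfl fun i _ => Finset.sum_add_distrib
    _ ≤ k * Fintype.card V + ∑ i ∈ Finset.range k, ∑ u : V, ∑ v : V,
            ind (u ∈ A i ∧ v ∈ A i ∧ ∀ a ∈ A (i + 1), gdist G w u v < gdist G w u a) := by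
        refine add_le_add_left ?_ _
        calc ∑ i ∈ Finset.range k, ∑ u : V, ind (u ∈ A i ∧ u ∉ A (i + 1)) * k
            = ∑ u : V, ∑ i ∈ Finset.range k, ind (u ∈ A i ∧ u ∉ A (i + 1)) * k :=
              Finset.sum_comm
          _ = ∑ u : V, (∑ i ∈ Finset.range k, ind (u ∈ A i ∧ u ∉ A (i + 1))) * k := by
              refine Finset.sum_congr rfl fun u _ => ?_
              rw [Finset.sum_mul]
          _ ≤ ∑ u : V, 1 * (k : ℝ) := by
              refine Finset.sum_le_sum fun u _ => ?_
              exact mul_le_mul_of_nonneg_right (hlvl u) (by positivity)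
          _ = k * Fintype.card V := by
              rw [Finset.sum_const, Finset.card_univ]
              simp [nsmul_eq_mul]
              ring
  
end EdgeCount




section Numeric

variable {n m : ℕ}

/-- the sampling probabilities, as in the theorem statement -/
noncomputable def QQ (n m i : ℕ) : ℝ :=
  (n : ℝ) ^ (-((2 : ℝ) ^ i * (1 / ((2 : ℝ) ^ (m + 1) - 1)))) *
    (2 : ℝ) ^ (-((2 : ℝ) ^ i) - 1)

lemma two_pow_big : (0:ℝ) < (2:ℝ) ^ (m+1) - 1 := by
  have h : (1:ℝ) ≤ 2 ^ m := one_le_pow₀ one_le_two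
  have : (2:ℝ) ^ (m+1) = 2 * 2 ^ m := by rw [pow_succ]; ring
  nlinarith

lemma nu_pos : 0 < 1 / ((2:ℝ) ^ (m+1) - 1) := by
  have := two_pow_big (m := m)
  positivity

lemma QQ_pos (hn : 1 ≤ n) (i : ℕ) : 0 < QQ n m i := by
  have hn0 : (0:ℝ) < n := by exact_mod_cast hn
  unfold QQ
  positivity

lemma QQ_le_half (hn : 1 ≤ n) (i : ℕ) : QQ n m i ≤ 1 / 2 := by
  have hn1 : (1:ℝ) ≤ (n:ℝ) := by exact_mod_cast hn
  have h2i : (1:ℝ) ≤ 2 ^ i := one_le_pow₀ one_le_two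
  have ha : (n:ℝ) ^ (-((2 : ℝ) ^ i * (1 / ((2 : ℝ) ^ (m + 1) - 1)))) ≤ 1 := by
    refine Real.rpow_le_one_of_one_le_of_nonpos hn1 ?_
    have := nu_pos (m := m)
    have h2ipos : (0:ℝ) < 2 ^ i := by positivity
    nlinarith
  have hb : (2:ℝ) ^ (-((2 : ℝ) ^ i) - 1) ≤ 1 / 2 := by
    have : (2:ℝ) ^ (-((2 : ℝ) ^ i) - 1) ≤ 2 ^ (-1 : ℝ) :=
      Real.rpow_le_rpow_of_exponent_le one_le_two (by linarith)
    rwa [Real.rpow_neg_one, show ((2:ℝ))⁻¹ = 1/2 by norm_num] at this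
  have ha0 : (0:ℝ) ≤ (n:ℝ) ^ (-((2 : ℝ) ^ i * (1 / ((2 : ℝ) ^ (m + 1) - 1)))) :=
    Real.rpow_nonneg (by positivity) _
  calc QQ n m i ≤ 1 * (1/2) := by
        unfold QQ
        apply mul_le_mul ha hb (by positivity) (by norm_num)
    _ = 1/2 := by norm_num

lemma QQ_prod (hn : 1 ≤ n) (i : ℕ) :
    (∏ j ∈ Finset.range i, QQ n m j)
      = (n : ℝ) ^ (-(((2:ℝ) ^ i - 1) * (1 / ((2 : ℝ) ^ (m + 1) - 1)))) *
        (2 : ℝ) ^ (-((2:ℝ) ^ i - 1) - i) := by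
  have hn0 : (0:ℝ) < n := by exact_mod_cast hn
  induction i with
  | zero => simp
  | succ i ih =>
    rw [Finset.prod_range_succ, ih]
    unfold QQ
    rw [mul_mul_mul_comm, ← Real.rpow_add hn0, ← Real.rpow_add two_pos]
    congr 1
    · congr 1
      push_cast [pow_succ]
      ring
    · push_cast [pow_succ]
      ring

lemma rpow_div_helper {x : ℝ} (hn0 : 0 < x) (a b c e : ℝ) :
    x * (x ^ a * (2:ℝ) ^ b) / (x ^ c * (2:ℝ) ^ e) = x ^ (1 + a - c) * (2:ℝ) ^ (b - e) := by
  have e1 : (0:ℝ) < x ^ c := Real.rpow_pos_of_pos hn0 _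
  have e2 : (0:ℝ) < (2:ℝ) ^ e := Real.rpow_pos_of_pos two_pos _
  rw [Real.rpow_sub hn0, Real.rpow_add hn0, Real.rpow_one, Real.rpow_sub two_pos]
  field_simp

lemma QQ_ratio (hn : 1 ≤ n) (i : ℕ) :
    (n : ℝ) * (∏ j ∈ Finset.range i, QQ n m j) / QQ n m i
      = (n : ℝ) ^ ((1:ℝ) + 1 / ((2 : ℝ) ^ (m + 1) - 1)) * (2:ℝ) ^ ((2:ℝ) - i) := by
  have hn0 : (0:ℝ) < n := by exact_mod_cast hn
  rw [QQ_prod hn i]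
  unfold QQ
  rw [rpow_div_helper hn0]
  congr 1
  · congr 1
    ring
  · congr 1
    ring

lemma QQ_sum_ratio (hn : 1 ≤ n) :
    ∑ i ∈ Finset.range m,
        (n : ℝ) ^ ((1:ℝ) + 1 / ((2 : ℝ) ^ (m + 1) - 1)) * (2:ℝ) ^ ((2:ℝ) - i)
      ≤ 8 * (n : ℝ) ^ ((1:ℝ) + 1 / ((2 : ℝ) ^ (m + 1) - 1)) := by
  have hn0 : (0:ℝ) < n := by exact_mod_cast hn
  have hNnn : (0:ℝ) ≤ (n : ℝ) ^ ((1:ℝ) + 1 / ((2 : ℝ) ^ (m + 1) - 1)) :=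
    Real.rpow_nonneg hn0.le _
  rw [← Finset.mul_sum]
  have hterm : ∀ i : ℕ, (2:ℝ) ^ ((2:ℝ) - i) = 4 * (1/2) ^ i := by
    intro i
    rw [Real.rpow_sub two_pos, Real.rpow_natCast]
    rw [show (2:ℝ) ^ (2:ℝ) = 4 by
      rw [show (2:ℝ) = ((2:ℕ):ℝ) by norm_num, Real.rpow_natCast]; norm_num]
    rw [div_eq_mul_inv, ← inv_pow]
    norm_num
  have hsum : ∑ i ∈ Finset.range m, (2:ℝ) ^ ((2:ℝ) - i) ≤ 8 := by
    rw [Finset.sum_congr rfl fun i _ => hterm i, ← Finset.mul_sum]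
    have hgeom : ∑ i ∈ Finset.range m, ((1:ℝ)/2) ^ i = (((1:ℝ)/2) ^ m - 1) / ((1/2) - 1) :=
      geom_sum_eq (by norm_num) m
    have hpm : (0:ℝ) ≤ (1/2:ℝ) ^ m := by positivity
    rw [hgeom]
    have hgeq : (((1:ℝ)/2) ^ m - 1) / ((1/2:ℝ) - 1) = 2 * (1 - (1/2:ℝ)^m) := by
      rw [div_eq_iff (by norm_num : ((1/2:ℝ) - 1) ≠ 0)]
      ring
    rw [hgeq]
    nlinarith
  calc (n : ℝ) ^ ((1:ℝ) + 1 / ((2 : ℝ) ^ (m + 1) - 1)) *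
        ∑ i ∈ Finset.range m, (2:ℝ) ^ ((2:ℝ) - i)
      ≤ (n : ℝ) ^ ((1:ℝ) + 1 / ((2 : ℝ) ^ (m + 1) - 1)) * 8 :=
        mul_le_mul_of_nonneg_left hsum hNnn
    _ = 8 * (n : ℝ) ^ ((1:ℝ) + 1 / ((2 : ℝ) ^ (m + 1) - 1)) := by ring

lemma QQ_top (hn : 1 ≤ n) :
    ((n : ℝ) * ∏ j ∈ Finset.range m, QQ n m j) ^ 2
      ≤ (n : ℝ) ^ ((1:ℝ) + 1 / ((2 : ℝ) ^ (m + 1) - 1)) := by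
  have hn0 : (0:ℝ) < n := by exact_mod_cast hn
  have hn1 : (1:ℝ) ≤ (n:ℝ) := by exact_mod_cast hn
  have h2m : (1:ℝ) ≤ 2 ^ m := one_le_pow₀ one_le_two
  rw [QQ_prod hn m]
  have hx : (n:ℝ) * ((n : ℝ) ^ (-(((2:ℝ) ^ m - 1) * (1 / ((2 : ℝ) ^ (m + 1) - 1)))) *
      (2 : ℝ) ^ (-((2:ℝ) ^ m - 1) - m))
      = (n : ℝ) ^ ((1:ℝ) + -(((2:ℝ) ^ m - 1) * (1 / ((2 : ℝ) ^ (m + 1) - 1)))) *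
        (2 : ℝ) ^ (-((2:ℝ) ^ m - 1) - m) := by
    rw [Real.rpow_add hn0, Real.rpow_one]; ring
  rw [hx, mul_pow, ← Real.rpow_natCast ((n:ℝ) ^ _) 2, ← Real.rpow_natCast ((2:ℝ) ^ _) 2,
    ← Real.rpow_mul hn0.le, ← Real.rpow_mul (by norm_num : (0:ℝ) ≤ 2)]
  have hexp : ((1:ℝ) + -(((2:ℝ) ^ m - 1) * (1 / ((2 : ℝ) ^ (m + 1) - 1)))) * (2:ℕ)
      = (1:ℝ) + 1 / ((2 : ℝ) ^ (m + 1) - 1) := by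
    have hne : (2:ℝ) ^ (m+1) - 1 ≠ 0 := ne_of_gt two_pow_big
    have h2 : (2:ℝ) ^ (m+1) = 2 * 2 ^ m := by rw [pow_succ]; ring
    field_simp
    rw [h2]
    ring
  rw [hexp]
  have h2fac : (2:ℝ) ^ ((-((2:ℝ) ^ m - 1) - m) * (2:ℕ)) ≤ 1 := by
    refine Real.rpow_le_one_of_one_le_of_nonpos one_le_two ?_
    have : (0:ℝ) ≤ (m:ℝ) := by positivity
    nlinarith
  calc (n : ℝ) ^ ((1:ℝ) + 1 / ((2 : ℝ) ^ (m + 1) - 1)) *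
        (2:ℝ) ^ ((-((2:ℝ) ^ m - 1) - m) * (2:ℕ))
      ≤ (n : ℝ) ^ ((1:ℝ) + 1 / ((2 : ℝ) ^ (m + 1) - 1)) * 1 :=
        mul_le_mul_of_nonneg_left h2fac (Real.rpow_nonneg hn0.le _)
    _ = _ := by rw [mul_one]

end Numeric


section Assemble
variable {V : Type} [Fintype V] [DecidableEq V] {m : ℕ}

lemma Tmid_bound (q : ℕ → ℝ) (hq0 : ∀ j, 0 < q j) (hq2 : ∀ j, q j ≤ 1 / 2)
    {i : ℕ} (him : i < m) (G : SimpleGraph V) (w : V → V → ℝ≥0∞) :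
    ∑ u : V, ∑ v : V, (∑ ω : Fin m → V → Bool, coinProb (m + 1) q ω *
        ind (u ∈ Asets (m + 1) (extendCoins (m + 1) ω) i ∧
             v ∈ Asets (m + 1) (extendCoins (m + 1) ω) i ∧
             ∀ a ∈ Asets (m + 1) (extendCoins (m + 1) ω) (i + 1),
               gdist G w u v < gdist G w u a))
      ≤ Fintype.card V * (1 + 4 * ((∏ j ∈ Finset.range i, q j) ^ 2
          / ∏ j ∈ Finset.range (i + 1), q j)) := by
  have hq1 : ∀ j, q j ≤ 1 := fun j => (hq2 j).trans (by norm_num)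
  have hq0' : ∀ j, 0 ≤ q j := fun j => (hq0 j).le
  set p1 := ∏ j ∈ Finset.range i, q j with hp1
  set t := ∏ j ∈ Finset.range (i + 1), q j with ht
  have htpos : 0 < t := Finset.prod_pos fun j _ => hq0 j
  have htle1 : t ≤ 1 := Finset.prod_le_one (fun j _ => (hq0 j).le) fun j _ => hq1 j
  have h1t0 : (0:ℝ) ≤ 1 - t := by linarith
  have inner : ∀ u : V, (∑ v : V, ∑ ω : Fin m → V → Bool, coinProb (m + 1) q ω *
      ind (u ∈ Asets (m + 1) (extendCoins (m + 1) ω) i ∧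
           v ∈ Asets (m + 1) (extendCoins (m + 1) ω) i ∧
           ∀ a ∈ Asets (m + 1) (extendCoins (m + 1) ω) (i + 1),
             gdist G w u v < gdist G w u a))
      ≤ 1 + 4 * (p1 ^ 2 / t) := by
    intro u
    rw [← Finset.add_sum_erase Finset.univ _ (Finset.mem_univ u)]
    have hdiag : (∑ ω : Fin m → V → Bool, coinProb (m + 1) q ω *
        ind (u ∈ Asets (m + 1) (extendCoins (m + 1) ω) i ∧
             u ∈ Asets (m + 1) (extendCoins (m + 1) ω) i ∧
             ∀ a ∈ Asets (m + 1) (extendCoins (m + 1) ω) (i + 1),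
               gdist G w u u < gdist G w u a)) ≤ 1 :=
      Esum_ind_le_one q hq0' hq1 _
    have hoff : (∑ v ∈ Finset.univ.erase u, ∑ ω : Fin m → V → Bool, coinProb (m + 1) q ω *
        ind (u ∈ Asets (m + 1) (extendCoins (m + 1) ω) i ∧
             v ∈ Asets (m + 1) (extendCoins (m + 1) ω) i ∧
             ∀ a ∈ Asets (m + 1) (extendCoins (m + 1) ω) (i + 1),
               gdist G w u v < gdist G w u a))
        ≤ 4 * (p1 ^ 2 / t) := by
      calc ∑ v ∈ Finset.univ.erase u, ∑ ω : Fin m → V → Bool, coinProb (m + 1) q ω *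
            ind (u ∈ Asets (m + 1) (extendCoins (m + 1) ω) i ∧
                 v ∈ Asets (m + 1) (extendCoins (m + 1) ω) i ∧
                 ∀ a ∈ Asets (m + 1) (extendCoins (m + 1) ω) (i + 1),
                   gdist G w u v < gdist G w u a)
          ≤ ∑ v ∈ Finset.univ.erase u, 4 * p1 ^ 2 *
              (1 - t) ^ (Finset.univ.filter fun x => gdist G w u x ≤ gdist G w u v).card := by
            refine Finset.sum_le_sum fun v hv => ?_
            exact Emid q hq0 hq2 him (gdist G w u) u v
              (Ne.symm (Finset.mem_erase.mp hv).1)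
        _ ≤ ∑ v : V, 4 * p1 ^ 2 *
              (1 - t) ^ (Finset.univ.filter fun x => gdist G w u x ≤ gdist G w u v).card := by
            refine Finset.sum_le_sum_of_subset_of_nonneg (Finset.erase_subset _ _) ?_
            intro v _ _
            exact mul_nonneg (by positivity) (pow_nonneg h1t0 _)
        _ = 4 * p1 ^ 2 * ∑ v : V,
              (1 - t) ^ (Finset.univ.filter fun x => gdist G w u x ≤ gdist G w u v).card := by
            rw [← Finset.mul_sum]
        _ ≤ 4 * p1 ^ 2 * (1 / t) := by
            refine mul_le_mul_of_nonneg_left ?_ (by positivity)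
            exact sum_pow_filter_le htpos htle1 (gdist G w u) Finset.univ
        _ = 4 * (p1 ^ 2 / t) := by ring
    linarith
  calc ∑ u : V, ∑ v : V, (∑ ω : Fin m → V → Bool, coinProb (m + 1) q ω *
        ind (u ∈ Asets (m + 1) (extendCoins (m + 1) ω) i ∧
             v ∈ Asets (m + 1) (extendCoins (m + 1) ω) i ∧
             ∀ a ∈ Asets (m + 1) (extendCoins (m + 1) ω) (i + 1),
               gdist G w u v < gdist G w u a))
      ≤ ∑ _u : V, (1 + 4 * (p1 ^ 2 / t)) := Finset.sum_le_sum fun u _ => inner u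
    _ = Fintype.card V * (1 + 4 * (p1 ^ 2 / t)) := by
        rw [Finset.sum_const, Finset.card_univ, nsmul_eq_mul]

lemma Ttop_bound (q : ℕ → ℝ) (hq0 : ∀ j, 0 < q j) (hq1 : ∀ j, q j ≤ 1)
    (G : SimpleGraph V) (w : V → V → ℝ≥0∞) :
    ∑ u : V, ∑ v : V, (∑ ω : Fin m → V → Bool, coinProb (m + 1) q ω *
        ind (u ∈ Asets (m + 1) (extendCoins (m + 1) ω) m ∧
             v ∈ Asets (m + 1) (extendCoins (m + 1) ω) m ∧
             ∀ a ∈ Asets (m + 1) (extendCoins (m + 1) ω) (m + 1),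
               gdist G w u v < gdist G w u a))
      ≤ Fintype.card V *
          (1 + Fintype.card V * (∏ j ∈ Finset.range m, q j) ^ 2) := by
  have hq0' : ∀ j, 0 ≤ q j := fun j => (hq0 j).le
  set pm := ∏ j ∈ Finset.range m, q j with hpm
  have hpmnn : 0 ≤ pm := Finset.prod_nonneg fun j _ => hq0' j
  have inner : ∀ u : V, (∑ v : V, ∑ ω : Fin m → V → Bool, coinProb (m + 1) q ω *
      ind (u ∈ Asets (m + 1) (extendCoins (m + 1) ω) m ∧
           v ∈ Asets (m + 1) (extendCoins (m + 1) ω) m ∧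
           ∀ a ∈ Asets (m + 1) (extendCoins (m + 1) ω) (m + 1),
             gdist G w u v < gdist G w u a))
      ≤ 1 + Fintype.card V * pm ^ 2 := by
    intro u
    rw [← Finset.add_sum_erase Finset.univ _ (Finset.mem_univ u)]
    have hdiag : (∑ ω : Fin m → V → Bool, coinProb (m + 1) q ω *
        ind (u ∈ Asets (m + 1) (extendCoins (m + 1) ω) m ∧
             u ∈ Asets (m + 1) (extendCoins (m + 1) ω) m ∧
             ∀ a ∈ Asets (m + 1) (extendCoins (m + 1) ω) (m + 1),
               gdist G w u u < gdist G w u a)) ≤ 1 :=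
      Esum_ind_le_one q hq0' hq1 _
    have hoff : (∑ v ∈ Finset.univ.erase u, ∑ ω : Fin m → V → Bool, coinProb (m + 1) q ω *
        ind (u ∈ Asets (m + 1) (extendCoins (m + 1) ω) m ∧
             v ∈ Asets (m + 1) (extendCoins (m + 1) ω) m ∧
             ∀ a ∈ Asets (m + 1) (extendCoins (m + 1) ω) (m + 1),
               gdist G w u v < gdist G w u a))
        ≤ Fintype.card V * pm ^ 2 := by
      calc ∑ v ∈ Finset.univ.erase u, ∑ ω : Fin m → V → Bool, coinProb (m + 1) q ω *
            ind (u ∈ Asets (m + 1) (extendCoins (m + 1) ω) m ∧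
                 v ∈ Asets (m + 1) (extendCoins (m + 1) ω) m ∧
                 ∀ a ∈ Asets (m + 1) (extendCoins (m + 1) ω) (m + 1),
                   gdist G w u v < gdist G w u a)
          ≤ ∑ _v ∈ Finset.univ.erase u, pm ^ 2 := by
            refine Finset.sum_le_sum fun v hv => ?_
            have huv : u ≠ v := Ne.symm (Finset.mem_erase.mp hv).1
            calc ∑ ω : Fin m → V → Bool, coinProb (m + 1) q ω *
                  ind (u ∈ Asets (m + 1) (extendCoins (m + 1) ω) m ∧
                       v ∈ Asets (m + 1) (extendCoins (m + 1) ω) m ∧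
                       ∀ a ∈ Asets (m + 1) (extendCoins (m + 1) ω) (m + 1),
                         gdist G w u v < gdist G w u a)
                ≤ ∑ ω : Fin m → V → Bool, coinProb (m + 1) q ω *
                    ind (u ∈ Asets (m + 1) (extendCoins (m + 1) ω) m ∧
                         v ∈ Asets (m + 1) (extendCoins (m + 1) ω) m) := by
                  refine Finset.sum_le_sum fun ω _ => ?_
                  exact mul_le_mul_of_nonneg_left
                    (ind_mono fun h => ⟨h.1, h.2.1⟩)
                    (coinProb_nonneg q hq0' hq1 ω)
              _ ≤ pm ^ 2 := Etop q hq0' hq1 u v huv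
        _ ≤ ∑ _v : V, pm ^ 2 := by
            refine Finset.sum_le_sum_of_subset_of_nonneg (Finset.erase_subset _ _) ?_
            intro v _ _; positivity
        _ = Fintype.card V * pm ^ 2 := by
            rw [Finset.sum_const, Finset.card_univ, nsmul_eq_mul]
    linarith
  calc ∑ u : V, ∑ v : V, (∑ ω : Fin m → V → Bool, coinProb (m + 1) q ω *
        ind (u ∈ Asets (m + 1) (extendCoins (m + 1) ω) m ∧
             v ∈ Asets (m + 1) (extendCoins (m + 1) ω) m ∧
             ∀ a ∈ Asets (m + 1) (extendCoins (m + 1) ω) (m + 1),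
               gdist G w u v < gdist G w u a))
      ≤ ∑ _u : V, (1 + Fintype.card V * pm ^ 2) := Finset.sum_le_sum fun u _ => inner u
    _ = Fintype.card V * (1 + Fintype.card V * pm ^ 2) := by
        rw [Finset.sum_const, Finset.card_univ, nsmul_eq_mul]

end Assemble


/-- Lemma 2.1: sampling each element of `A_i` into `A_{i+1}` independently with
probability `q_i = n^{-2^i ν} · 2^{-2^i - 1}`, where `ν = 1/(2^k - 1)`, the expected number of
edges of `H = {{u,v} : u ∈ V, v ∈ B(u)}` is at most `C(kn + n^{1+ν})` for an absolute
constant `C`. -/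
theorem statement15 :
    ∃ C : ℝ, 0 < C ∧
      ∀ (V : Type) [Fintype V] [DecidableEq V] (G : SimpleGraph V), G.Connected →
        ∀ w : V → V → ℝ≥0∞, (∀ u v, G.Adj u v → w u v = w v u) →
          (∀ u v, G.Adj u v → w u v ≠ ⊤) →
          ∀ k : ℕ, 1 ≤ k →
            ∀ pv : (Fin (k - 1) → V → Bool) → ℕ → V → V,
              (∀ (ω : Fin (k - 1) → V → Bool) (i : ℕ), i < k → ∀ v : V,
                (Asets k (extendCoins k ω) i).Nonempty →
                  pv ω i v ∈ Asets k (extendCoins k ω) i ∧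
                  ∀ a ∈ Asets k (extendCoins k ω) i,
                    gdist G w v (pv ω i v) ≤ gdist G w v a) →
              ∑ ω : Fin (k - 1) → V → Bool,
                  coinProb k
                    (fun i => (Fintype.card V : ℝ) ^
                        (-((2 : ℝ) ^ i * (1 / ((2 : ℝ) ^ k - 1)))) *
                      (2 : ℝ) ^ (-((2 : ℝ) ^ i) - 1)) ω *
                  ((emulGraph G w (Asets k (extendCoins k ω)) (pv ω) k).edgeSet.ncard : ℝ) ≤
                C * (k * (Fintype.card V : ℝ) +
                  (Fintype.card V : ℝ) ^ ((1 : ℝ) + 1 / ((2 : ℝ) ^ k - 1))) := by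

  refine ⟨100, by norm_num, ?_⟩
  intro V _ _ G hconn w _ _ k hk pv _
  obtain ⟨m, rfl⟩ : ∃ m, k = m + 1 := ⟨k - 1, by omega⟩
  haveI : Nonempty V := hconn.nonempty
  have hn1 : 1 ≤ Fintype.card V := Fintype.card_pos
  set n : ℕ := Fintype.card V with hndef
  have hqfun : (fun i : ℕ => (n : ℝ) ^ (-((2 : ℝ) ^ i * (1 / ((2 : ℝ) ^ (m + 1) - 1)))) *
      (2 : ℝ) ^ (-((2 : ℝ) ^ i) - 1)) = QQ n m := rfl
  rw [hqfun]
  have hq0 : ∀ j, 0 < QQ n m j := QQ_pos hn1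
  have hq2 : ∀ j, QQ n m j ≤ 1 / 2 := QQ_le_half hn1
  have hq0' : ∀ j, 0 ≤ QQ n m j := fun j => (hq0 j).le
  have hq1 : ∀ j, QQ n m j ≤ 1 := fun j => (hq2 j).trans (by norm_num)
  have hNN : (0:ℝ) ≤ (n : ℝ) ^ ((1:ℝ) + 1 / ((2 : ℝ) ^ (m + 1) - 1)) :=
    Real.rpow_nonneg (by positivity) _
  -- pointwise edge count
  have step1 : ∀ ω : Fin m → V → Bool,
      (((emulGraph G w (Asets (m + 1) (extendCoins (m + 1) ω)) (pv ω) (m + 1)).edgeSet.ncard :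
          ℕ) : ℝ)
        ≤ (m + 1 : ℕ) * (n : ℝ) + ∑ i ∈ Finset.range (m + 1), ∑ u : V, ∑ v : V,
            ind (u ∈ Asets (m + 1) (extendCoins (m + 1) ω) i ∧
                 v ∈ Asets (m + 1) (extendCoins (m + 1) ω) i ∧
                 ∀ a ∈ Asets (m + 1) (extendCoins (m + 1) ω) (i + 1),
                   gdist G w u v < gdist G w u a) := by
    intro ω
    exact edge_count G w (Asets (m + 1) (extendCoins (m + 1) ω)) (pv ω) (m + 1)
      (fun i j hij => Asets_subset _ hij) (fun i hi => Asets_eq_empty _ hi (by omega))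
  calc ∑ ω : Fin m → V → Bool,
        coinProb (m + 1) (QQ n m) ω *
          (((emulGraph G w (Asets (m + 1) (extendCoins (m + 1) ω)) (pv ω)
              (m + 1)).edgeSet.ncard : ℕ) : ℝ)
      ≤ ∑ ω : Fin m → V → Bool,
          coinProb (m + 1) (QQ n m) ω *
            ((m + 1 : ℕ) * (n : ℝ) + ∑ i ∈ Finset.range (m + 1), ∑ u : V, ∑ v : V,
              ind (u ∈ Asets (m + 1) (extendCoins (m + 1) ω) i ∧
                   v ∈ Asets (m + 1) (extendCoins (m + 1) ω) i ∧
                   ∀ a ∈ Asets (m + 1) (extendCoins (m + 1) ω) (i + 1),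
                     gdist G w u v < gdist G w u a)) := by
        refine Finset.sum_le_sum fun ω _ => ?_
        exact mul_le_mul_of_nonneg_left (step1 ω) (coinProb_nonneg _ hq0' hq1 ω)
    _ = (∑ ω : Fin m → V → Bool, coinProb (m + 1) (QQ n m) ω) * ((m + 1 : ℕ) * (n : ℝ))
        + ∑ ω : Fin m → V → Bool,
            coinProb (m + 1) (QQ n m) ω * ∑ i ∈ Finset.range (m + 1), ∑ u : V, ∑ v : V,
              ind (u ∈ Asets (m + 1) (extendCoins (m + 1) ω) i ∧
                   v ∈ Asets (m + 1) (extendCoins (m + 1) ω) i ∧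
                   ∀ a ∈ Asets (m + 1) (extendCoins (m + 1) ω) (i + 1),
                     gdist G w u v < gdist G w u a) := by
        simp only [mul_add]
        rw [Finset.sum_add_distrib, Finset.sum_mul]
    _ = ((m + 1 : ℕ) * (n : ℝ))
        + ∑ i ∈ Finset.range (m + 1), ∑ u : V, ∑ v : V,
            (∑ ω : Fin m → V → Bool, coinProb (m + 1) (QQ n m) ω *
              ind (u ∈ Asets (m + 1) (extendCoins (m + 1) ω) i ∧
                   v ∈ Asets (m + 1) (extendCoins (m + 1) ω) i ∧
                   ∀ a ∈ Asets (m + 1) (extendCoins (m + 1) ω) (i + 1),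
                     gdist G w u v < gdist G w u a)) := by
        rw [sum_coinProb_one (QQ n m), one_mul]
        congr 1
        simp only [Finset.mul_sum]
        rw [Finset.sum_comm]
        refine Finset.sum_congr rfl fun i _ => ?_
        rw [Finset.sum_comm]
        refine Finset.sum_congr rfl fun u _ => ?_
        rw [Finset.sum_comm]
    _ ≤ ((m + 1 : ℕ) * (n : ℝ))
        + ((∑ i ∈ Finset.range m, ((n : ℝ) + 4 *
              ((n : ℝ) ^ ((1:ℝ) + 1 / ((2 : ℝ) ^ (m + 1) - 1)) * (2:ℝ) ^ ((2:ℝ) - i))))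
          + ((n : ℝ) + ((n : ℝ) * ∏ j ∈ Finset.range m, QQ n m j) ^ 2)) := by
        refine add_le_add_right ?_ _
        rw [Finset.sum_range_succ]
        refine add_le_add ?_ ?_
        · -- middle levels
          refine Finset.sum_le_sum fun i hi => ?_
          have him : i < m := Finset.mem_range.mp hi
          refine (Tmid_bound (QQ n m) hq0 hq2 him G w).trans ?_
          have hp1pos : (0:ℝ) < ∏ j ∈ Finset.range i, QQ n m j :=
            Finset.prod_pos fun j _ => hq0 j
          have hqipos := hq0 i
          have heq : (n : ℝ) * (1 + 4 * ((∏ j ∈ Finset.range i, QQ n m j) ^ 2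
              / ∏ j ∈ Finset.range (i + 1), QQ n m j))
              = (n : ℝ) + 4 * ((n : ℝ) * (∏ j ∈ Finset.range i, QQ n m j) / QQ n m i) := by
            rw [Finset.prod_range_succ]
            field_simp
          rw [heq, QQ_ratio hn1 i]
        · -- top level
          refine (Ttop_bound (QQ n m) hq0 hq1 G w).trans ?_
          have heq : (n : ℝ) * (1 + (n:ℝ) * (∏ j ∈ Finset.range m, QQ n m j) ^ 2)
              = (n : ℝ) + ((n : ℝ) * ∏ j ∈ Finset.range m, QQ n m j) ^ 2 := by ring
          rw [heq]
    _ ≤ ((m + 1 : ℕ) * (n : ℝ))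
        + (((m : ℝ) * (n : ℝ) + 4 * (8 * (n : ℝ) ^ ((1:ℝ) + 1 / ((2 : ℝ) ^ (m + 1) - 1))))
          + ((n : ℝ) + (n : ℝ) ^ ((1:ℝ) + 1 / ((2 : ℝ) ^ (m + 1) - 1)))) := by
        refine add_le_add_right (add_le_add ?_ (add_le_add_right (QQ_top hn1) _)) _
        rw [Finset.sum_add_distrib, Finset.sum_const, Finset.card_range, nsmul_eq_mul,
          ← Finset.mul_sum]
        refine add_le_add_right ?_ _
        exact mul_le_mul_of_nonneg_left (QQ_sum_ratio hn1) (by norm_num)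
    _ ≤ 100 * ((m + 1 : ℕ) * (n : ℝ) +
          (n : ℝ) ^ ((1:ℝ) + 1 / ((2 : ℝ) ^ (m + 1) - 1))) := by
        have hA : (0:ℝ) ≤ (m + 1 : ℕ) * (n : ℝ) := by positivity
        have hmn : ((m : ℝ) * (n : ℝ) + (n : ℝ)) = ((m + 1 : ℕ) : ℝ) * (n : ℝ) := by
          push_cast; ring
        nlinarith [hNN, hA, hmn]

end ASP
end
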